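/- arXiv:2603.03720 — 9 statements merged into one kernel-verified Lean document; each statement's English description precedes it below -/
import Mathlib

section
/- Let X be a non-negative real random variable on a probability space, let α > 0 and A ≥ 0. If lim_{λ→+∞} λ^α · E[e^{-λX}] = A, then lim_{ε→0+} ε^{-α} · P(X ≤ ε) = A / Γ(1+α), where Γ is the Gamma function. -/
open MeasureTheory Filter Set

-- Karamata's Tauberian theorem, formalized from scratch.

private lemma aux_int_omega {Ω : Type*} [MeasurableSpace Ω] (P : Measure Ω) [IsProbabilityMeasure P]
    (X : Ω → ℝ) (hXm : Measurable X) (hX : ∀ᵐ ω ∂P, 0 ≤ X ω) (φ : ℝ → ℝ) (hφ : Continuous φ)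
    {lam : ℝ} (hlam : 0 ≤ lam) :
    Integrable (fun ω => φ (Real.exp (-lam * X ω))) P := by
  obtain ⟨C, hC⟩ := isCompact_Icc.exists_bound_of_continuousOn
    (s := Icc (0:ℝ) 1) hφ.continuousOn
  refine (integrable_const C).mono' ?_ ?_
  · exact (hφ.measurable.comp (Real.measurable_exp.comp (hXm.const_mul (-lam)))).aestronglyMeasurable
  · filter_upwards [hX] with ω hω
    have h0 : -lam * X ω ≤ 0 := by
      have : 0 ≤ lam * X ω := mul_nonneg hlam hω
      linarith
    exact hC _ ⟨(Real.exp_pos _).le, Real.exp_le_one_iff.2 h0⟩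

private lemma aux_int_t (α : ℝ) (hα : 0 < α) (ψ : ℝ → ℝ) (hψ : Continuous ψ) :
    IntegrableOn (fun t => Real.exp (-t) * ψ (Real.exp (-t)) * t ^ (α - 1)) (Ioi 0) := by
  obtain ⟨C, hC⟩ := isCompact_Icc.exists_bound_of_continuousOn
    (s := Icc (0:ℝ) 1) hψ.continuousOn
  refine ((Real.GammaIntegral_convergent hα).const_mul C).mono' ?_ ?_
  · exact (((Real.measurable_exp.comp measurable_neg).mul
      (hψ.measurable.comp (Real.measurable_exp.comp measurable_neg))).mul
      (show Measurable fun t : ℝ => t ^ (α - 1) by measurability)).aestronglyMeasurable.restrict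
  · rw [ae_restrict_iff' measurableSet_Ioi]
    refine ae_of_all _ fun t ht => ?_
    have ht' : (0:ℝ) < t := ht
    have h1 : Real.exp (-t) ∈ Icc (0:ℝ) 1 :=
      ⟨(Real.exp_pos _).le, Real.exp_le_one_iff.2 (by linarith)⟩
    have h2 : |ψ (Real.exp (-t))| ≤ C := hC _ h1
    have h3 : (0:ℝ) ≤ t ^ (α - 1) := Real.rpow_nonneg ht'.le _
    have h4 : (0:ℝ) < Real.exp (-t) := Real.exp_pos _
    rw [Real.norm_eq_abs, abs_mul, abs_mul, abs_of_pos h4, abs_of_nonneg h3]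
    have h5 : Real.exp (-t) * |ψ (Real.exp (-t))| * t ^ (α - 1) ≤ Real.exp (-t) * C * t ^ (α - 1) := by
      gcongr
    linarith

private lemma aux_scaled {Ω : Type*} [MeasurableSpace Ω] (P : Measure Ω) [IsProbabilityMeasure P]
    (X : Ω → ℝ) (α A : ℝ)
    (h : Tendsto (fun lam : ℝ => lam ^ α * ∫ ω, Real.exp (-lam * X ω) ∂P) atTop (nhds A))
    (n : ℕ) :
    Tendsto (fun lam : ℝ => lam ^ α * ∫ ω, Real.exp (-lam * X ω) ^ (n+1) ∂P) atTop
      (nhds (A * ((n:ℝ)+1) ^ (-α))) := by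
  set k : ℝ := (n:ℝ)+1 with hkdef
  have hk : (0:ℝ) < k := by positivity
  have h1 : Tendsto (fun lam : ℝ => (k*lam) ^ α * ∫ ω, Real.exp (-(k*lam) * X ω) ∂P) atTop
      (nhds A) := h.comp (Tendsto.const_mul_atTop hk tendsto_id)
  have h2 := h1.const_mul (k ^ (-α))
  rw [mul_comm] at h2
  refine h2.congr' ?_
  filter_upwards [eventually_gt_atTop (0:ℝ)] with lam hlam
  have hcoef : k ^ (-α) * (k*lam) ^ α = lam ^ α := by
    rw [Real.mul_rpow hk.le hlam.le, Real.rpow_neg hk.le]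
    have : k ^ α ≠ 0 := ne_of_gt (Real.rpow_pos_of_pos hk _)
    field_simp
  have hI : (∫ ω, Real.exp (-(k*lam) * X ω) ∂P) = ∫ ω, Real.exp (-lam * X ω) ^ (n+1) ∂P := by
    refine integral_congr_ae (ae_of_all _ fun ω => ?_)
    show Real.exp (-(k*lam) * X ω) = Real.exp (-lam * X ω) ^ (n+1)
    rw [← Real.exp_nat_mul]
    congr 1
    push_cast [hkdef]
    ring
  rw [← mul_assoc, hcoef, hI]

private lemma aux_cut (α : ℝ) (hα : 0 < α) {T : ℝ} (hT : 0 < T) :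
    ∫ t in Ioc (0:ℝ) T, t ^ (α - 1) = T ^ α / α := by
  rw [← intervalIntegral.integral_of_le hT.le,
    integral_rpow (Or.inl (by linarith : (-1:ℝ) < α - 1))]
  rw [sub_add_cancel, Real.zero_rpow hα.ne']
  ring

private lemma aux_cut_int (α : ℝ) (hα : 0 < α) {T : ℝ} (hT : 0 < T) :
    IntegrableOn (fun t => (if t ≤ T then (1:ℝ) else 0) * t ^ (α - 1)) (Ioi 0) := by
  have h1 : IntegrableOn (fun t : ℝ => t ^ (α - 1)) (Ioc 0 T) := by
    rw [← intervalIntegrable_iff_integrableOn_Ioc_of_le hT.le]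
    exact intervalIntegral.intervalIntegrable_rpow' (by linarith)
  have h2 : (fun t => (if t ≤ T then (1:ℝ) else 0) * t ^ (α - 1)) =
      (Iic T).indicator (fun t : ℝ => t ^ (α - 1)) := by
    funext t
    rw [Set.indicator_apply]
    by_cases hc : t ≤ T <;> simp [hc, Set.mem_Iic]
  rw [h2]
  rw [IntegrableOn, integrable_indicator_iff measurableSet_Iic, IntegrableOn,
    Measure.restrict_restrict measurableSet_Iic, Set.inter_comm, Set.Ioi_inter_Iic]
  exact h1

private lemma aux_cut_val (α : ℝ) (hα : 0 < α) {T : ℝ} (hT : 0 < T) :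
    ∫ t in Ioi (0:ℝ), (if t ≤ T then (1:ℝ) else 0) * t ^ (α - 1) = T ^ α / α := by
  have h2 : (fun t => (if t ≤ T then (1:ℝ) else 0) * t ^ (α - 1)) =
      (Iic T).indicator (fun t : ℝ => t ^ (α - 1)) := by
    funext t
    rw [Set.indicator_apply]
    by_cases hc : t ≤ T <;> simp [hc, Set.mem_Iic]
  rw [h2, integral_indicator measurableSet_Iic,
    Measure.restrict_restrict measurableSet_Iic, Set.inter_comm, Set.Ioi_inter_Iic]
  exact aux_cut α hα hT

private lemma aux_poly {Ω : Type*} [MeasurableSpace Ω] (P : Measure Ω) [IsProbabilityMeasure P]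
    (X : Ω → ℝ) (hXm : Measurable X) (hX : ∀ᵐ ω ∂P, 0 ≤ X ω)
    (α A : ℝ) (hα : 0 < α)
    (h : Tendsto (fun lam : ℝ => lam ^ α * ∫ ω, Real.exp (-lam * X ω) ∂P) atTop (nhds A))
    (q : Polynomial ℝ) :
    Tendsto (fun lam : ℝ =>
        lam ^ α * ∫ ω, Real.exp (-lam * X ω) * q.eval (Real.exp (-lam * X ω)) ∂P) atTop
      (nhds ((A / Real.Gamma α) *
        ∫ t in Ioi 0, Real.exp (-t) * q.eval (Real.exp (-t)) * t ^ (α - 1))) := by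
  induction q using Polynomial.induction_on' with
  | add p r hp hr =>
      have hint : (∫ t in Ioi 0, Real.exp (-t) * (p + r).eval (Real.exp (-t)) * t ^ (α-1)) =
          (∫ t in Ioi 0, Real.exp (-t) * p.eval (Real.exp (-t)) * t ^ (α-1)) +
          (∫ t in Ioi 0, Real.exp (-t) * r.eval (Real.exp (-t)) * t ^ (α-1)) := by
        rw [← integral_add (aux_int_t α hα _ p.continuous) (aux_int_t α hα _ r.continuous)]
        refine setIntegral_congr_fun measurableSet_Ioi fun t ht => ?_
        simp only [Polynomial.eval_add]
        ring
      rw [hint, mul_add]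
      refine Tendsto.congr' ?_ (hp.add hr)
      filter_upwards [eventually_ge_atTop (0:ℝ)] with lam hlam
      have h1 : (∫ ω, Real.exp (-lam * X ω) * (p+r).eval (Real.exp (-lam * X ω)) ∂P) =
          (∫ ω, Real.exp (-lam * X ω) * p.eval (Real.exp (-lam * X ω)) ∂P) +
          (∫ ω, Real.exp (-lam * X ω) * r.eval (Real.exp (-lam * X ω)) ∂P) := by
        rw [← integral_add
          (aux_int_omega P X hXm hX (fun u => u * p.eval u) (continuous_id.mul p.continuous) hlam)
          (aux_int_omega P X hXm hX (fun u => u * r.eval u) (continuous_id.mul r.continuous) hlam)]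
        refine integral_congr_ae (ae_of_all _ fun ω => ?_)
        simp only [Polynomial.eval_add]
        ring
      simp only [h1]
      ring
  | monomial n a =>
      set k : ℝ := (n:ℝ)+1 with hk
      have hkpos : (0:ℝ) < k := by positivity
      have hΓ : Real.Gamma α ≠ 0 := (Real.Gamma_pos_of_pos hα).ne'
      have hfn : ∀ lam : ℝ, (∫ ω, Real.exp (-lam * X ω) *
          (Polynomial.monomial n a).eval (Real.exp (-lam * X ω)) ∂P)
          = a * ∫ ω, Real.exp (-lam * X ω) ^ (n+1) ∂P := by
        intro lam
        rw [← MeasureTheory.integral_const_mul]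
        refine integral_congr_ae (ae_of_all _ fun ω => ?_)
        simp only [Polynomial.eval_monomial, pow_succ]
        ring
      have hval : (A / Real.Gamma α) * ∫ t in Ioi 0,
          Real.exp (-t) * (Polynomial.monomial n a).eval (Real.exp (-t)) * t ^ (α - 1)
          = a * (A * k ^ (-α)) := by
        have h2 : (∫ t in Ioi 0,
            Real.exp (-t) * (Polynomial.monomial n a).eval (Real.exp (-t)) * t ^ (α - 1))
            = a * ∫ t in Ioi 0, t ^ (α-1) * Real.exp (-(k * t)) := by
          rw [← MeasureTheory.integral_const_mul]
          refine setIntegral_congr_fun measurableSet_Ioi fun t ht => ?_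
          have he : Real.exp (-(k*t)) = Real.exp (-t) ^ (n+1) := by
            rw [← Real.exp_nat_mul]; congr 1; push_cast [hk]; ring
          simp only [Polynomial.eval_monomial, he, pow_succ]
          ring
        rw [h2, Real.integral_rpow_mul_exp_neg_mul_Ioi hα hkpos, Real.rpow_neg hkpos.le,
          one_div, Real.inv_rpow hkpos.le]
        field_simp
      rw [hval]
      refine Tendsto.congr ?_ ((aux_scaled P X α A h n).const_mul a)
      intro lam
      rw [hfn lam]
      ring

private lemma aux_upper (α : ℝ) (hα : 0 < α) (c : ℝ) (hc : 0 ≤ c) (ε : ℝ) (hε : 0 < ε) :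
    ∃ q : Polynomial ℝ,
      (∀ u ∈ Icc (0:ℝ) 1, (if Real.exp (-1) ≤ u then (1:ℝ) else 0) ≤ u * q.eval u) ∧
      c * ∫ t in Ioi 0, Real.exp (-t) * q.eval (Real.exp (-t)) * t ^ (α - 1) < c / α + ε := by
  have hΓ : 0 < Real.Gamma α := Real.Gamma_pos_of_pos hα
  set δ' : ℝ := ε / (8 * (c * Real.Gamma α + 1)) with hδ'def
  have hδ' : 0 < δ' := by positivity
  have hbase : 1 < 1 + ε * α / (4 * (c + 1)) := by
    have : 0 < ε * α / (4 * (c + 1)) := by positivity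
    linarith
  set T : ℝ := (1 + ε * α / (4 * (c + 1))) ^ (α⁻¹) with hTdef
  have hT1 : 1 < T :=
    (Real.one_lt_rpow_iff_of_pos (by linarith)).2 (Or.inl ⟨hbase, by positivity⟩)
  have hT0 : 0 < T := lt_trans one_pos hT1
  have hTα : T ^ α = 1 + ε * α / (4 * (c + 1)) := Real.rpow_inv_rpow (by linarith) hα.ne'
  have hd : 0 < Real.exp (-1) - Real.exp (-T) :=
    sub_pos.2 (Real.exp_lt_exp.2 (by linarith))
  set d : ℝ := Real.exp (-1) - Real.exp (-T) with hddef
  set f : ℝ → ℝ := fun u =>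
    (max u (Real.exp (-1)))⁻¹ * min 1 (max 0 ((u - Real.exp (-T)) / d)) with hfdef
  have hmaxpos : ∀ u : ℝ, 0 < max u (Real.exp (-1)) :=
    fun u => lt_of_lt_of_le (Real.exp_pos _) (le_max_right _ _)
  have hfc : Continuous f := by
    refine Continuous.mul ?_ ?_
    · exact (continuous_id.max continuous_const).inv₀ fun u => (hmaxpos u).ne'
    · exact continuous_const.min
        (continuous_const.max ((continuous_id.sub continuous_const).div_const d))
  obtain ⟨p, hp⟩ := exists_polynomial_near_of_continuousOn 0 1 f hfc.continuousOn δ' hδ'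
  have hfnonneg : ∀ u : ℝ, 0 ≤ f u := fun u =>
    mul_nonneg (inv_nonneg.2 (hmaxpos u).le) (le_min zero_le_one (le_max_left _ _))
  refine ⟨p + Polynomial.C δ', ?_, ?_⟩
  · -- claim i
    intro u hu
    have hfq : f u ≤ (p + Polynomial.C δ').eval u := by
      have h1 := (abs_sub_lt_iff.1 (hp u hu)).2
      simp only [Polynomial.eval_add, Polynomial.eval_C]
      linarith
    by_cases hcase : Real.exp (-1) ≤ u
    · rw [if_pos hcase]
      have hu0 : 0 < u := lt_of_lt_of_le (Real.exp_pos _) hcase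
      have hmax : max u (Real.exp (-1)) = u := max_eq_left hcase
      have hramp : min 1 (max 0 ((u - Real.exp (-T)) / d)) = 1 := by
        have h1 : (1:ℝ) ≤ (u - Real.exp (-T)) / d := by
          rw [le_div_iff₀ hd, hddef]
          linarith
        exact min_eq_left (le_trans h1 (le_max_right _ _))
      have hfu : f u = u⁻¹ := by rw [hfdef]; simp only [hmax, hramp, mul_one]
      calc (1:ℝ) = u * u⁻¹ := (mul_inv_cancel₀ hu0.ne').symm
        _ = u * f u := by rw [hfu]
        _ ≤ u * (p + Polynomial.C δ').eval u := mul_le_mul_of_nonneg_left hfq hu0.le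
    · rw [if_neg hcase]
      exact mul_nonneg hu.1 (le_trans (hfnonneg u) hfq)
  · -- integral bound
    have hqle : ∀ u ∈ Icc (0:ℝ) 1,
        (p + Polynomial.C δ').eval u ≤ f u + 2 * δ' := by
      intro u hu
      have h1 := (abs_sub_lt_iff.1 (hp u hu)).1
      simp only [Polynomial.eval_add, Polynomial.eval_C]
      linarith
    have hii : ∀ t ∈ Ioi (0:ℝ),
        Real.exp (-t) * (p + Polynomial.C δ').eval (Real.exp (-t)) * t ^ (α - 1)
        ≤ (if t ≤ T then (1:ℝ) else 0) * t ^ (α - 1)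
            + (2 * δ') * (Real.exp (-t) * t ^ (α - 1)) := by
      intro t ht
      have ht0 : (0:ℝ) < t := ht
      have hu : Real.exp (-t) ∈ Icc (0:ℝ) 1 :=
        ⟨(Real.exp_pos _).le, Real.exp_le_one_iff.2 (by linarith)⟩
      have htp : (0:ℝ) ≤ t ^ (α - 1) := Real.rpow_nonneg ht0.le _
      have hfb : Real.exp (-t) * f (Real.exp (-t)) ≤ (if t ≤ T then (1:ℝ) else 0) := by
        by_cases hcase : t ≤ T
        · rw [if_pos hcase]
          have h1 : Real.exp (-t) * (max (Real.exp (-t)) (Real.exp (-1)))⁻¹ ≤ 1 := by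
            rw [← div_eq_mul_inv, div_le_one (hmaxpos _)]
            exact le_max_left _ _
          have h2 : min 1 (max 0 ((Real.exp (-t) - Real.exp (-T)) / d)) ≤ 1 := min_le_left _ _
          have h3 : (0:ℝ) ≤ min 1 (max 0 ((Real.exp (-t) - Real.exp (-T)) / d)) :=
            le_min zero_le_one (le_max_left _ _)
          have h0 : (0:ℝ) ≤ Real.exp (-t) * (max (Real.exp (-t)) (Real.exp (-1)))⁻¹ :=
            mul_nonneg (Real.exp_pos _).le (inv_nonneg.2 (hmaxpos _).le)
          have : Real.exp (-t) * f (Real.exp (-t)) =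
              (Real.exp (-t) * (max (Real.exp (-t)) (Real.exp (-1)))⁻¹) *
              min 1 (max 0 ((Real.exp (-t) - Real.exp (-T)) / d)) := by
            rw [hfdef]; ring
          rw [this]
          nlinarith
        · rw [if_neg hcase]
          have hlt : Real.exp (-t) < Real.exp (-T) := Real.exp_lt_exp.2 (by linarith)
          have hr : (Real.exp (-t) - Real.exp (-T)) / d ≤ 0 :=
            div_nonpos_of_nonpos_of_nonneg (by linarith) hd.le
          have : f (Real.exp (-t)) = 0 := by
            simp only [hfdef, max_eq_left hr, min_eq_right zero_le_one, mul_zero]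
          rw [this, mul_zero]
      have h4 : Real.exp (-t) * (p + Polynomial.C δ').eval (Real.exp (-t)) ≤
          Real.exp (-t) * (f (Real.exp (-t)) + 2 * δ') :=
        mul_le_mul_of_nonneg_left (hqle _ hu) (Real.exp_pos _).le
      have h5 : Real.exp (-t) * (p + Polynomial.C δ').eval (Real.exp (-t)) ≤
          (if t ≤ T then (1:ℝ) else 0) + 2 * δ' * Real.exp (-t) := by nlinarith
      nlinarith [mul_le_mul_of_nonneg_right h5 htp]
    have hint1 := aux_cut_int α hα hT0
    have hint2 : IntegrableOn (fun t => (2 * δ') * (Real.exp (-t) * t ^ (α - 1))) (Ioi 0) :=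
      (Real.GammaIntegral_convergent hα).const_mul _
    have hW : (∫ t in Ioi 0,
        Real.exp (-t) * (p + Polynomial.C δ').eval (Real.exp (-t)) * t ^ (α - 1))
        ≤ T ^ α / α + 2 * δ' * Real.Gamma α := by
      have hmono := integral_mono_ae (aux_int_t α hα _ (p + Polynomial.C δ').continuous)
        (hint1.add hint2) ?_
      · refine le_trans hmono ?_
        simp only [Pi.add_apply]
        rw [integral_add hint1 hint2, aux_cut_val α hα hT0, MeasureTheory.integral_const_mul,
          ← Real.Gamma_eq_integral hα]
      · rw [EventuallyLE, ae_restrict_iff' measurableSet_Ioi]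
        exact ae_of_all _ hii
    have harith1 : c * (T ^ α / α) ≤ c / α + ε / 4 := by
      rw [hTα]
      have h1 : c * ((1 + ε * α / (4 * (c + 1))) / α) = c / α + c * ε / (4 * (c + 1)) := by
        field_simp
      have h2 : c * ε / (4 * (c + 1)) ≤ ε / 4 := by
        rw [div_le_div_iff₀ (by positivity) (by norm_num)]
        nlinarith
      linarith
    have harith2 : c * (2 * δ' * Real.Gamma α) ≤ ε / 4 := by
      rw [hδ'def, show c * (2 * (ε / (8 * (c * Real.Gamma α + 1))) * Real.Gamma α)
        = (c * Real.Gamma α) * ε * 2 / (8 * (c * Real.Gamma α + 1)) by ring,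
        div_le_div_iff₀ (by positivity) (by norm_num)]
      nlinarith [mul_nonneg (mul_nonneg hc hΓ.le) hε.le]
    calc c * ∫ t in Ioi 0,
          Real.exp (-t) * (p + Polynomial.C δ').eval (Real.exp (-t)) * t ^ (α - 1)
        ≤ c * (T ^ α / α + 2 * δ' * Real.Gamma α) := mul_le_mul_of_nonneg_left hW hc
      _ = c * (T ^ α / α) + c * (2 * δ' * Real.Gamma α) := by ring
      _ ≤ c / α + ε / 4 + ε / 4 := by linarith
      _ < c / α + ε := by linarith

private lemma aux_lower (α : ℝ) (hα : 0 < α) (c : ℝ) (hc : 0 ≤ c) (ε : ℝ) (hε : 0 < ε) :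
    ∃ q : Polynomial ℝ,
      (∀ u ∈ Icc (0:ℝ) 1, u * q.eval u ≤ (if Real.exp (-1) ≤ u then (1:ℝ) else 0)) ∧
      c / α - ε < c * ∫ t in Ioi 0, Real.exp (-t) * q.eval (Real.exp (-t)) * t ^ (α - 1) := by
  have hΓ : 0 < Real.Gamma α := Real.Gamma_pos_of_pos hα
  set δ' : ℝ := ε / (8 * (c * Real.Gamma α + 1)) with hδ'def
  have hδ' : 0 < δ' := by positivity
  set m : ℝ := min (1/2) (ε * α / (4 * (c + 1))) with hmdef
  have hm0 : 0 < m := lt_min (by norm_num) (by positivity)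
  have hm2 : m ≤ 1/2 := min_le_left _ _
  have hmε : m ≤ ε * α / (4 * (c + 1)) := min_le_right _ _
  set S : ℝ := (1 - m) ^ (α⁻¹) with hSdef
  have hb0 : (0:ℝ) < 1 - m := by linarith
  have hS0 : 0 < S := Real.rpow_pos_of_pos hb0 _
  have hS1 : S < 1 := Real.rpow_lt_one hb0.le (by linarith) (by positivity)
  have hSα : S ^ α = 1 - m := Real.rpow_inv_rpow hb0.le hα.ne'
  have hd : 0 < Real.exp (-S) - Real.exp (-1) := sub_pos.2 (Real.exp_lt_exp.2 (by linarith))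
  set d : ℝ := Real.exp (-S) - Real.exp (-1) with hddef
  set f : ℝ → ℝ := fun u =>
    (max u (Real.exp (-1)))⁻¹ * min 1 (max 0 ((u - Real.exp (-1)) / d)) with hfdef
  have hmaxpos : ∀ u : ℝ, 0 < max u (Real.exp (-1)) :=
    fun u => lt_of_lt_of_le (Real.exp_pos _) (le_max_right _ _)
  have hfc : Continuous f := by
    refine Continuous.mul ?_ ?_
    · exact (continuous_id.max continuous_const).inv₀ fun u => (hmaxpos u).ne'
    · exact continuous_const.min
        (continuous_const.max ((continuous_id.sub continuous_const).div_const d))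
  obtain ⟨p, hp⟩ := exists_polynomial_near_of_continuousOn 0 1 f hfc.continuousOn δ' hδ'
  have hfnonneg : ∀ u : ℝ, 0 ≤ f u := fun u =>
    mul_nonneg (inv_nonneg.2 (hmaxpos u).le) (le_min zero_le_one (le_max_left _ _))
  refine ⟨p - Polynomial.C δ', ?_, ?_⟩
  · intro u hu
    have hqf : (p - Polynomial.C δ').eval u ≤ f u := by
      have h1 := (abs_sub_lt_iff.1 (hp u hu)).1
      simp only [Polynomial.eval_sub, Polynomial.eval_C]
      linarith
    by_cases hcase : Real.exp (-1) ≤ u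
    · rw [if_pos hcase]
      have hu0 : 0 < u := lt_of_lt_of_le (Real.exp_pos _) hcase
      have hfle : f u ≤ u⁻¹ := by
        have h2 : min 1 (max 0 ((u - Real.exp (-1)) / d)) ≤ 1 := min_le_left _ _
        have h3 : f u = u⁻¹ * min 1 (max 0 ((u - Real.exp (-1)) / d)) := by
          simp only [hfdef, max_eq_left hcase]
        rw [h3]
        nlinarith [inv_nonneg.2 hu0.le]
      calc u * (p - Polynomial.C δ').eval u ≤ u * f u := mul_le_mul_of_nonneg_left hqf hu0.le
        _ ≤ u * u⁻¹ := mul_le_mul_of_nonneg_left hfle hu0.le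
        _ = 1 := mul_inv_cancel₀ hu0.ne'
    · rw [if_neg hcase]
      have hf0 : f u = 0 := by
        have hr : (u - Real.exp (-1)) / d ≤ 0 :=
          div_nonpos_of_nonpos_of_nonneg (by linarith [not_le.1 hcase]) hd.le
        simp only [hfdef, max_eq_left hr, min_eq_right zero_le_one, mul_zero]
      calc u * (p - Polynomial.C δ').eval u ≤ u * f u := mul_le_mul_of_nonneg_left hqf hu.1
        _ = 0 := by rw [hf0, mul_zero]
  · have hqge : ∀ u ∈ Icc (0:ℝ) 1, f u - 2 * δ' ≤ (p - Polynomial.C δ').eval u := by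
      intro u hu
      have h1 := (abs_sub_lt_iff.1 (hp u hu)).2
      simp only [Polynomial.eval_sub, Polynomial.eval_C]
      linarith
    have hii : ∀ t ∈ Ioi (0:ℝ),
        (if t ≤ S then (1:ℝ) else 0) * t ^ (α - 1) - (2 * δ') * (Real.exp (-t) * t ^ (α - 1))
        ≤ Real.exp (-t) * (p - Polynomial.C δ').eval (Real.exp (-t)) * t ^ (α - 1) := by
      intro t ht
      have ht0 : (0:ℝ) < t := ht
      have hu : Real.exp (-t) ∈ Icc (0:ℝ) 1 :=
        ⟨(Real.exp_pos _).le, Real.exp_le_one_iff.2 (by linarith)⟩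
      have htp : (0:ℝ) ≤ t ^ (α - 1) := Real.rpow_nonneg ht0.le _
      have hfb : (if t ≤ S then (1:ℝ) else 0) ≤ Real.exp (-t) * f (Real.exp (-t)) := by
        by_cases hcase : t ≤ S
        · rw [if_pos hcase]
          have hge : Real.exp (-1) ≤ Real.exp (-t) := Real.exp_le_exp.2 (by linarith)
          have hramp : min 1 (max 0 ((Real.exp (-t) - Real.exp (-1)) / d)) = 1 := by
            have h1 : (1:ℝ) ≤ (Real.exp (-t) - Real.exp (-1)) / d := by
              rw [le_div_iff₀ hd, hddef]
              have h2 : Real.exp (-S) ≤ Real.exp (-t) := Real.exp_le_exp.2 (by linarith)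
              linarith
            exact min_eq_left (le_trans h1 (le_max_right _ _))
          have hfu : f (Real.exp (-t)) = (Real.exp (-t))⁻¹ := by
            simp only [hfdef, max_eq_left hge, hramp, mul_one]
          rw [hfu, mul_inv_cancel₀ (Real.exp_pos _).ne']
        · rw [if_neg hcase]
          exact mul_nonneg (Real.exp_pos _).le (hfnonneg _)
      have h4 : Real.exp (-t) * (f (Real.exp (-t)) - 2 * δ') ≤
          Real.exp (-t) * (p - Polynomial.C δ').eval (Real.exp (-t)) :=
        mul_le_mul_of_nonneg_left (hqge _ hu) (Real.exp_pos _).le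
      have hee : Real.exp (-t) ≤ 1 := hu.2
      have h5 : (if t ≤ S then (1:ℝ) else 0) - 2 * δ' * Real.exp (-t) ≤
          Real.exp (-t) * (p - Polynomial.C δ').eval (Real.exp (-t)) := by nlinarith
      nlinarith [mul_le_mul_of_nonneg_right h5 htp]
    have hint1 := aux_cut_int α hα hS0
    have hint2 : IntegrableOn (fun t => (2 * δ') * (Real.exp (-t) * t ^ (α - 1))) (Ioi 0) :=
      (Real.GammaIntegral_convergent hα).const_mul _
    have hW : S ^ α / α - 2 * δ' * Real.Gamma α ≤
        ∫ t in Ioi 0, Real.exp (-t) * (p - Polynomial.C δ').eval (Real.exp (-t)) * t ^ (α - 1) := by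
      have hmono := integral_mono_ae (hint1.sub hint2)
        (aux_int_t α hα _ (p - Polynomial.C δ').continuous) ?_
      · refine le_trans ?_ hmono
        simp only [Pi.sub_apply]
        rw [integral_sub hint1 hint2, aux_cut_val α hα hS0, MeasureTheory.integral_const_mul,
          ← Real.Gamma_eq_integral hα]
      · rw [EventuallyLE, ae_restrict_iff' measurableSet_Ioi]
        exact ae_of_all _ hii
    have harith1 : c / α - ε / 4 ≤ c * (S ^ α / α) := by
      rw [hSα]
      have h1 : c * ((1 - m) / α) = c / α - c * m / α := by
        field_simp
      have h3 : c * m ≤ c * (ε * α / (4 * (c + 1))) := mul_le_mul_of_nonneg_left hmε hc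
      have h4 : c * (ε * α / (4 * (c + 1))) / α ≤ ε / 4 := by
        have h5 : c * (ε * α / (4 * (c + 1))) / α = c * ε / (4 * (c + 1)) := by
          field_simp
        rw [h5, div_le_div_iff₀ (by positivity) (by norm_num)]
        nlinarith
      have h6 : c * m / α ≤ c * (ε * α / (4 * (c + 1))) / α := by
        exact (div_le_div_iff_of_pos_right hα).2 h3
      linarith
    have harith2 : c * (2 * δ' * Real.Gamma α) ≤ ε / 4 := by
      rw [hδ'def, show c * (2 * (ε / (8 * (c * Real.Gamma α + 1))) * Real.Gamma α)
        = (c * Real.Gamma α) * ε * 2 / (8 * (c * Real.Gamma α + 1)) by ring,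
        div_le_div_iff₀ (by positivity) (by norm_num)]
      nlinarith [mul_nonneg (mul_nonneg hc hΓ.le) hε.le]
    have hfinal := mul_le_mul_of_nonneg_left hW hc
    calc c / α - ε < c / α - ε / 4 - ε / 4 := by linarith
      _ ≤ c * (S ^ α / α) - c * (2 * δ' * Real.Gamma α) := by linarith
      _ = c * (S ^ α / α - 2 * δ' * Real.Gamma α) := by ring
      _ ≤ _ := hfinal

theorem stmt_0 {Ω : Type*} [MeasurableSpace Ω] (P : Measure Ω) [IsProbabilityMeasure P]
    (X : Ω → ℝ) (hXm : Measurable X) (hX : ∀ᵐ ω ∂P, 0 ≤ X ω)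
    (α A : ℝ) (hα : 0 < α) (hA : 0 ≤ A)
    (h : Tendsto (fun lam : ℝ => lam ^ α * ∫ ω, Real.exp (-lam * X ω) ∂P) atTop (nhds A)) :
    Tendsto (fun ε : ℝ => ε ^ (-α) * (P {ω | X ω ≤ ε}).toReal)
      (nhdsWithin 0 (Set.Ioi 0)) (nhds (A / Real.Gamma (1 + α))) := by
  have hΓ : 0 < Real.Gamma α := Real.Gamma_pos_of_pos hα
  have hc0 : 0 ≤ A / Real.Gamma α := div_nonneg hA hΓ.le
  have hLeq : A / Real.Gamma (1 + α) = (A / Real.Gamma α) / α := by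
    rw [add_comm, Real.Gamma_add_one hα.ne']
    ring
  -- a.e. equivalence of indicator and exp-form, valid for each lam > 0
  have hindic : ∀ lam : ℝ, 0 < lam → ∀ ω : Ω, 0 ≤ X ω →
      ((1:ℝ) ≤ lam * X ω → ¬ (Real.exp (-1) ≤ Real.exp (-lam * X ω)) ∨ lam * X ω = 1) := by
    intro lam hlam ω hω h1
    by_cases he : lam * X ω = 1
    · exact Or.inr he
    · left
      intro hcon
      rw [Real.exp_le_exp] at hcon
      have : lam * X ω ≤ 1 := by linarith
      exact he (le_antisymm this h1)
  have key : Tendsto (fun lam : ℝ => lam ^ α * (P {ω | X ω ≤ lam⁻¹}).toReal) atTop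
      (nhds ((A / Real.Gamma α) / α)) := by
    rw [Metric.tendsto_nhds]
    intro ε hε
    obtain ⟨qU, hqU1, hqU2⟩ := aux_upper α hα _ hc0 ε hε
    obtain ⟨qL, hqL1, hqL2⟩ := aux_lower α hα _ hc0 ε hε
    have hUlim := aux_poly P X hXm hX α A hα h qU
    have hLlim := aux_poly P X hXm hX α A hα h qL
    have hUev : ∀ᶠ lam : ℝ in atTop,
        lam ^ α * ∫ ω, Real.exp (-lam * X ω) * qU.eval (Real.exp (-lam * X ω)) ∂P
          < (A / Real.Gamma α) / α + ε := hUlim.eventually_lt_const hqU2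
    have hLev : ∀ᶠ lam : ℝ in atTop,
        (A / Real.Gamma α) / α - ε <
          lam ^ α * ∫ ω, Real.exp (-lam * X ω) * qL.eval (Real.exp (-lam * X ω)) ∂P :=
      hLlim.eventually_const_lt hqL2
    have hcomp : ∀ᶠ lam : ℝ in atTop,
        (lam ^ α * (P {ω | X ω ≤ lam⁻¹}).toReal ≤
          lam ^ α * ∫ ω, Real.exp (-lam * X ω) * qU.eval (Real.exp (-lam * X ω)) ∂P) ∧
        (lam ^ α * ∫ ω, Real.exp (-lam * X ω) * qL.eval (Real.exp (-lam * X ω)) ∂P ≤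
          lam ^ α * (P {ω | X ω ≤ lam⁻¹}).toReal) := by
      filter_upwards [eventually_gt_atTop (0:ℝ)] with lam hlam
      have hS : MeasurableSet {ω | X ω ≤ lam⁻¹} := hXm measurableSet_Iic
      have hPeq : (P {ω | X ω ≤ lam⁻¹}).toReal =
          ∫ ω, Set.indicator {ω | X ω ≤ lam⁻¹} 1 ω ∂P := (integral_indicator_one hS).symm
      have hiff : ∀ ω : Ω, 0 ≤ X ω →
          ((X ω ≤ lam⁻¹) ↔ Real.exp (-1) ≤ Real.exp (-lam * X ω)) := by
        intro ω hω
        rw [Real.exp_le_exp]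
        constructor
        · intro h1
          have h2 := mul_le_mul_of_nonneg_left h1 hlam.le
          rw [mul_inv_cancel₀ hlam.ne'] at h2
          linarith
        · intro h1
          have h2 : lam * X ω ≤ 1 := by linarith
          calc X ω = lam⁻¹ * (lam * X ω) := by field_simp
            _ ≤ lam⁻¹ * 1 := mul_le_mul_of_nonneg_left h2 (inv_nonneg.2 hlam.le)
            _ = lam⁻¹ := mul_one _
      have hmemIcc : ∀ ω : Ω, 0 ≤ X ω → Real.exp (-lam * X ω) ∈ Icc (0:ℝ) 1 := by
        intro ω hω
        refine ⟨(Real.exp_pos _).le, Real.exp_le_one_iff.2 ?_⟩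
        nlinarith
      constructor
      · rw [hPeq]
        refine mul_le_mul_of_nonneg_left ?_ (Real.rpow_nonneg hlam.le _)
        refine integral_mono_ae ((integrable_const (1:ℝ)).indicator hS)
          (aux_int_omega P X hXm hX (fun u => u * qU.eval u)
            (continuous_id.mul qU.continuous) hlam.le) ?_
        filter_upwards [hX] with ω hω
        have hval := hqU1 _ (hmemIcc ω hω)
        show Set.indicator {ω | X ω ≤ lam⁻¹} 1 ω ≤
          Real.exp (-lam * X ω) * qU.eval (Real.exp (-lam * X ω))
        rw [Set.indicator_apply]
        by_cases hcase : ω ∈ {ω | X ω ≤ lam⁻¹}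
        · rw [if_pos hcase, if_pos ((hiff ω hω).1 hcase)] at *
          exact hval
        · rw [if_neg hcase, if_neg (fun hh => hcase ((hiff ω hω).2 hh))] at *
          exact hval
      · rw [hPeq]
        refine mul_le_mul_of_nonneg_left ?_ (Real.rpow_nonneg hlam.le _)
        refine integral_mono_ae
          (aux_int_omega P X hXm hX (fun u => u * qL.eval u)
            (continuous_id.mul qL.continuous) hlam.le)
          ((integrable_const (1:ℝ)).indicator hS) ?_
        filter_upwards [hX] with ω hω
        have hval := hqL1 _ (hmemIcc ω hω)
        show Real.exp (-lam * X ω) * qL.eval (Real.exp (-lam * X ω)) ≤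
          Set.indicator {ω | X ω ≤ lam⁻¹} 1 ω
        rw [Set.indicator_apply]
        by_cases hcase : ω ∈ {ω | X ω ≤ lam⁻¹}
        · rw [if_pos hcase, if_pos ((hiff ω hω).1 hcase)] at *
          exact hval
        · rw [if_neg hcase, if_neg (fun hh => hcase ((hiff ω hω).2 hh))] at *
          exact hval
    filter_upwards [hUev, hLev, hcomp] with lam h1 h2 h3
    rw [Real.dist_eq, abs_sub_lt_iff]
    constructor
    · linarith [h3.1]
    · linarith [h3.2]
  rw [hLeq]
  have hcomp := key.comp tendsto_inv_nhdsGT_zero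
  refine hcomp.congr' ?_
  filter_upwards [eventually_mem_nhdsWithin] with ε' hε'
  have hε'0 : (0:ℝ) < ε' := hε'
  show (ε'⁻¹) ^ α * (P {ω | X ω ≤ (ε'⁻¹)⁻¹}).toReal = ε' ^ (-α) * (P {ω | X ω ≤ ε'}).toReal
  rw [inv_inv, Real.inv_rpow hε'0.le, ← Real.rpow_neg hε'0.le]
end

section
/- Let n ≥ 1 be an integer, T > 0, and a_1, ..., a_n ≥ 0. Then ∫_{D^n_T} exp(-∑_{j=1}^n a_j u_j) du_1 ⋯ du_n = T^n · ∑_{m ∈ ℕ^n} (∏_{j=1}^n (-T a_j)^{m_j}) / Γ(n + m_1 + ⋯ + m_n + 1), where the multiple series over m = (m_1, ..., m_n) ∈ ℕ^n converges absolutely. -/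
open MeasureTheory
open scoped ENNReal

lemma prod_fact_aux (p q : ℕ) :
    (p.factorial : ℂ) * ∏ j ∈ Finset.range (q+1), ((p:ℂ) + 1 + j)
      = ((p + q + 1).factorial : ℂ) := by
  induction q with
  | zero =>
    simp [Nat.factorial_succ]
    push_cast
    ring
  | succ q ih =>
    rw [Finset.prod_range_succ, ← mul_assoc, ih]
    have e : p + (q+1) + 1 = (p+q+1) + 1 := by ring
    rw [e, Nat.factorial_succ (p+q+1), Nat.cast_mul]
    push_cast
    ring

lemma beta01 (p q : ℕ) :
    ∫ x in (0:ℝ)..1, x ^ p * (1 - x) ^ q =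
      (p.factorial * q.factorial : ℝ) / (p + q + 1).factorial := by
  have hu : 0 < Complex.re ((p : ℂ) + 1) := by simp; positivity
  have h := Complex.betaIntegral_eval_nat_add_one_right hu q
  rw [Complex.betaIntegral] at h
  have hint : (∫ x in (0:ℝ)..1, (x:ℂ) ^ (((p:ℂ) + 1) - 1) * ((1:ℂ) - x) ^ (((q:ℂ) + 1) - 1))
      = ((∫ x in (0:ℝ)..1, x ^ p * (1 - x) ^ q : ℝ) : ℂ) := by
    rw [← intervalIntegral.integral_ofReal]
    refine intervalIntegral.integral_congr fun x hx => ?_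
    have : ((p:ℂ) + 1) - 1 = (p : ℂ) := by ring
    rw [this]
    have : ((q:ℂ) + 1) - 1 = (q : ℂ) := by ring
    rw [this, Complex.cpow_natCast, Complex.cpow_natCast]
    push_cast
    ring
  rw [hint] at h
  have hprod := prod_fact_aux p q
  have hne : (p.factorial : ℂ) ≠ 0 := Nat.cast_ne_zero.mpr p.factorial_ne_zero
  have hne2 : ((p+q+1).factorial : ℂ) ≠ 0 := Nat.cast_ne_zero.mpr (p+q+1).factorial_ne_zero
  have hprodne : (∏ j ∈ Finset.range (q+1), ((p:ℂ) + 1 + j)) ≠ 0 := by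
    intro h0
    rw [h0, mul_zero] at hprod
    exact hne2 hprod.symm
  rw [← Complex.ofReal_inj]
  rw [h]
  push_cast
  rw [div_eq_div_iff hprodne hne2, ← hprod]
  ring

lemma betaT (p q : ℕ) {T : ℝ} (hT : 0 < T) :
    ∫ x in (0:ℝ)..T, x ^ p * (T - x) ^ q
      = T ^ (p+q+1) * (p.factorial * q.factorial) / (p+q+1).factorial := by
  have h := intervalIntegral.integral_comp_mul_left (a := (0:ℝ)) (b := 1)
    (fun x => x ^ p * (T - x) ^ q) hT.ne'
  simp only [mul_zero, mul_one, smul_eq_mul] at h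
  have h2 : (∫ x in (0:ℝ)..1, (T*x) ^ p * (T - T*x) ^ q)
      = T^(p+q) * ∫ x in (0:ℝ)..1, x^p * (1-x)^q := by
    rw [← intervalIntegral.integral_const_mul]
    refine intervalIntegral.integral_congr fun x _ => ?_
    have e : T - T*x = T * (1-x) := by ring
    rw [e, mul_pow, mul_pow]
    ring
  rw [h2, beta01] at h
  have hI : (∫ x in (0:ℝ)..T, x ^ p * (T - x) ^ q)
      = T * (T^(p+q) * ((p.factorial : ℝ) * q.factorial / (p+q+1).factorial)) := by
    rw [h]
    field_simp
  rw [hI, pow_succ]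
  ring


/-- The open simplex `D^n_T = {u ∈ ℝⁿ : uⱼ > 0 for all j, u₁ + ⋯ + uₙ < T}`. -/
def simplexD (n : ℕ) (T : ℝ) : Set (Fin n → ℝ) :=
  {u | (∀ j, 0 < u j) ∧ ∑ j, u j < T}

lemma measurableSet_simplexD (n : ℕ) (T : ℝ) : MeasurableSet (simplexD n T) := by
  have h1 : MeasurableSet {u : Fin n → ℝ | ∀ j, 0 < u j} := by
    rw [Set.setOf_forall]
    exact MeasurableSet.iInter fun j =>
      measurableSet_lt measurable_const (measurable_pi_apply j)
  have h2 : MeasurableSet {u : Fin n → ℝ | ∑ j, u j < T} :=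
    measurableSet_lt (Finset.measurable_sum _ fun j _ => measurable_pi_apply j)
      measurable_const
  exact h1.inter h2

lemma simplexD_zero {T : ℝ} (hT : 0 < T) : simplexD 0 T = Set.univ := by
  ext u
  simp [simplexD, hT]

-- the key set identity
lemma simplexD_succ_eq (n : ℕ) (T : ℝ) :
    (MeasurableEquiv.piFinSuccAbove (fun _ : Fin (n+1) => ℝ) 0) ⁻¹'
        {p : ℝ × (Fin n → ℝ) | p.1 ∈ Set.Ioo 0 T ∧ p.2 ∈ simplexD n (T - p.1)}
      = simplexD (n+1) T := by
  ext u
  simp only [Set.mem_preimage, MeasurableEquiv.piFinSuccAbove_apply, Set.mem_setOf_eq,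
    Set.mem_Ioo, simplexD, Fin.insertNthEquiv_symm_apply, Fin.removeNth_zero]
  rw [Fin.sum_univ_succ]
  have htail : ∀ i : Fin n, Fin.tail u i = u i.succ := fun i => rfl
  constructor
  · rintro ⟨⟨h0, hT0⟩, hpos, hsum⟩
    refine ⟨fun j => ?_, ?_⟩
    · rcases Fin.eq_zero_or_eq_succ j with rfl | ⟨i, rfl⟩
      · exact h0
      · exact htail i ▸ hpos i
    · have : ∑ i : Fin n, Fin.tail u i = ∑ i : Fin n, u i.succ :=
        Finset.sum_congr rfl fun i _ => htail i
      linarith [this ▸ hsum]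
  · rintro ⟨hpos, hsum⟩
    have hnn : (0:ℝ) ≤ ∑ i : Fin n, u i.succ :=
      Finset.sum_nonneg fun i _ => (hpos i.succ).le
    refine ⟨⟨hpos 0, by linarith⟩, fun i => htail i ▸ hpos i.succ, ?_⟩
    have : ∑ i : Fin n, Fin.tail u i = ∑ i : Fin n, u i.succ :=
      Finset.sum_congr rfl fun i _ => htail i
    rw [this]
    linarith



set_option maxHeartbeats 1000000 in
lemma dirichlet (n : ℕ) : ∀ (T : ℝ), 0 < T → ∀ (m : Fin n → ℕ),
    ∫⁻ u in simplexD n T, ENNReal.ofReal (∏ j, u j ^ m j)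
      = ENNReal.ofReal (T ^ (n + ∑ j, m j) * (∏ j, ((m j).factorial : ℝ)) /
          (n + ∑ j, m j).factorial) := by
  induction n with
  | zero =>
    intro T hT m
    rw [simplexD_zero hT]
    simp only [Finset.univ_eq_empty, Finset.prod_empty, Finset.sum_empty]
    rw [Measure.restrict_univ, lintegral_const]
    have : (volume : Measure (Fin 0 → ℝ)) Set.univ = 1 := by
      rw [volume_pi, Measure.pi_univ]
      simp
    rw [this, mul_one]
    norm_num
  | succ n ih =>
    intro T hT m
    set e := MeasurableEquiv.piFinSuccAbove (fun _ : Fin (n+1) => ℝ) 0 with he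
    set A : Set (ℝ × (Fin n → ℝ)) :=
      {p | p.1 ∈ Set.Ioo 0 T ∧ p.2 ∈ simplexD n (T - p.1)} with hA
    have hmp : MeasurePreserving e.symm
        (volume : Measure (ℝ × (Fin n → ℝ))) (volume : Measure (Fin (n+1) → ℝ)) := by
      have h1 := (measurePreserving_piFinSuccAbove (fun _ : Fin (n+1) => (volume : Measure ℝ)) 0).symm
      rw [volume_pi, Measure.volume_eq_prod, volume_pi]
      exact h1
    have himg : e.symm '' A = simplexD (n+1) T := by
      rw [MeasurableEquiv.image_symm]
      exact simplexD_succ_eq n T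
    have key := hmp.setLIntegral_comp_emb e.symm.measurableEmbedding
      (fun u => ENNReal.ofReal (∏ j, u j ^ m j)) A
    rw [himg] at key
    rw [← key]
    set G : ℝ × (Fin n → ℝ) → ℝ≥0∞ :=
      fun p => ENNReal.ofReal (p.1 ^ m 0 * ∏ j, p.2 j ^ m j.succ) with hG
    have hcomp : ∀ p : ℝ × (Fin n → ℝ),
        ENNReal.ofReal (∏ j, (e.symm p) j ^ m j) = G p := by
      intro p
      congr 1
      have hsymm : e.symm p = Fin.cons p.1 p.2 := by
        simp [he, MeasurableEquiv.piFinSuccAbove, Fin.insertNthEquiv_zero]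
        rfl
      rw [hsymm, Fin.prod_univ_succ]
      simp
    have step1 : ∫⁻ p in A, ENNReal.ofReal (∏ j, (e.symm p) j ^ m j) = ∫⁻ p in A, G p :=
      lintegral_congr fun p => hcomp p
    rw [step1]
    have mA : MeasurableSet A := by
      have h1 : MeasurableSet {p : ℝ × (Fin n → ℝ) | p.1 ∈ Set.Ioo 0 T} :=
        measurable_fst measurableSet_Ioo
      have h2 : MeasurableSet {p : ℝ × (Fin n → ℝ) | p.2 ∈ simplexD n (T - p.1)} := by
        have e1 : {p : ℝ × (Fin n → ℝ) | p.2 ∈ simplexD n (T - p.1)}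
            = {p : ℝ × (Fin n → ℝ) | ∀ j, 0 < p.2 j} ∩ {p | p.1 + ∑ j, p.2 j < T} := by
          ext p
          simp only [simplexD, Set.mem_setOf_eq, Set.mem_inter_iff]
          constructor
          · rintro ⟨h1, h2⟩; exact ⟨h1, by linarith⟩
          · rintro ⟨h1, h2⟩; exact ⟨h1, by linarith⟩
        rw [e1]
        refine MeasurableSet.inter ?_ ?_
        · rw [Set.setOf_forall]
          exact MeasurableSet.iInter fun j => measurableSet_lt measurable_const
            measurable_snd.eval
        · exact measurableSet_lt (measurable_fst.add
            (Finset.measurable_sum _ fun j _ => measurable_snd.eval))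
            measurable_const
      exact h1.inter h2
    have Gmeas : Measurable G := by
      apply ENNReal.measurable_ofReal.comp
      exact (measurable_fst.pow_const _).mul
        (Finset.measurable_prod _ fun j _ =>
          (measurable_snd.eval).pow_const _)
    rw [← lintegral_indicator mA G, Measure.volume_eq_prod,
      lintegral_prod _ ((Gmeas.indicator mA).aemeasurable)]
    set K := n + ∑ j : Fin n, m j.succ with hK
    set Cc : ℝ := (∏ j : Fin n, ((m j.succ).factorial : ℝ)) / K.factorial with hCc
    have hCc0 : 0 ≤ Cc := by positivity
    set h : ℝ → ℝ := fun x => x ^ m 0 * ((T - x) ^ K * Cc) with hh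
    have hslice : ∀ x : ℝ, (∫⁻ y, A.indicator G (x, y) ∂volume)
        = (Set.Ioo (0:ℝ) T).indicator (fun x => ENNReal.ofReal (h x)) x := by
      intro x
      by_cases hx : x ∈ Set.Ioo (0:ℝ) T
      · rw [Set.indicator_of_mem hx]
        have hid : ∀ y, A.indicator G (x, y)
            = (simplexD n (T - x)).indicator (fun y => G (x, y)) y := by
          intro y
          by_cases hy : y ∈ simplexD n (T - x)
          · rw [Set.indicator_of_mem (show (x,y) ∈ A from ⟨hx, hy⟩), Set.indicator_of_mem hy]
          · rw [Set.indicator_of_notMem (fun hmem => hy hmem.2),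
              Set.indicator_of_notMem hy]
        simp_rw [hid]
        rw [lintegral_indicator (measurableSet_simplexD n (T - x)) _]
        have hxpow : (0:ℝ) ≤ x ^ m 0 := pow_nonneg hx.1.le _
        have expand : ∀ y : Fin n → ℝ, G (x, y)
            = ENNReal.ofReal (x ^ m 0) * ENNReal.ofReal (∏ j, y j ^ m j.succ) := by
          intro y
          rw [hG]
          exact ENNReal.ofReal_mul hxpow
        simp_rw [expand]
        rw [lintegral_const_mul _ (by
          exact ENNReal.measurable_ofReal.comp
            (Finset.measurable_prod _ fun j _ => (measurable_pi_apply j).pow_const _)),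
          ih (T - x) (by linarith [hx.2]) (fun j => m j.succ),
          ← ENNReal.ofReal_mul hxpow]
        congr 1
        rw [hh]
        simp only
        rw [hCc]
        field_simp
        rw [hK]
        ring
      · rw [Set.indicator_of_notMem hx]
        have hz : ∀ y : Fin n → ℝ, A.indicator G (x, y) = 0 := fun y =>
          Set.indicator_of_notMem (fun hmem => hx hmem.1) _
        simp [hz]
    simp_rw [hslice]
    rw [lintegral_indicator measurableSet_Ioo _]
    have hcont : Continuous h := by
      rw [hh]; continuity
    have hint : IntegrableOn h (Set.Ioo 0 T) volume :=
      (hcont.integrableOn_Icc (a := 0) (b := T)).mono_set Set.Ioo_subset_Icc_self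
    have hnn : 0 ≤ᵐ[volume.restrict (Set.Ioo 0 T)] h := by
      refine (ae_restrict_iff' measurableSet_Ioo).2 (ae_of_all _ fun x hx => ?_)
      have h1 : (0:ℝ) ≤ x ^ m 0 := pow_nonneg hx.1.le _
      have h2 : (0:ℝ) ≤ (T - x) ^ K := pow_nonneg (by linarith [hx.2]) _
      rw [hh]
      exact mul_nonneg h1 (mul_nonneg h2 hCc0)
    rw [← ofReal_integral_eq_lintegral_ofReal hint hnn]
    congr 1
    have : (∫ x in Set.Ioo (0:ℝ) T, h x) = ∫ x in (0:ℝ)..T, h x := by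
      rw [intervalIntegral.integral_of_le hT.le, MeasureTheory.integral_Ioc_eq_integral_Ioo]
    rw [this]
    have : (∫ x in (0:ℝ)..T, h x) = (∫ x in (0:ℝ)..T, x ^ m 0 * (T - x) ^ K) * Cc := by
      rw [← intervalIntegral.integral_mul_const]
      refine intervalIntegral.integral_congr fun x _ => ?_
      rw [hh]; ring
    rw [this, betaT (m 0) K hT]
    have hidx : m 0 + K + 1 = (n + 1) + ∑ j, m j := by
      rw [Fin.sum_univ_succ, hK]; omega
    rw [hidx]
    rw [Fin.prod_univ_succ (fun j => ((m j).factorial : ℝ))]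
    rw [hCc]
    have hKfac : (K.factorial : ℝ) ≠ 0 := Nat.cast_ne_zero.mpr K.factorial_ne_zero
    rw [← hidx]
    have hfac : ((m 0 + K + 1).factorial : ℝ) ≠ 0 :=
      Nat.cast_ne_zero.mpr (m 0 + K + 1).factorial_ne_zero
    field_simp

lemma pi_prod_tsum {n : ℕ} (g : Fin n → ℕ → ℝ) (hg : ∀ j, Summable fun k => ‖g j k‖) :
    Summable (fun m : Fin n → ℕ => ‖∏ j, g j (m j)‖) ∧
      (∑' m : Fin n → ℕ, ∏ j, g j (m j)) = ∏ j, ∑' k, g j k := by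
  induction n with
  | zero =>
    constructor
    · exact Summable.of_finite
    · rw [tsum_eq_single (fun i => i.elim0) (fun b hb =>
        absurd (Subsingleton.elim b _) hb)]
      simp
  | succ n ih =>
    obtain ⟨ihs, ihe⟩ := ih (fun j => g j.succ) (fun j => hg j.succ)
    set E : (Fin (n+1) → ℕ) ≃ ℕ × (Fin n → ℕ) := (Fin.consEquiv fun _ => ℕ).symm with hE
    have hEsymm : ∀ z : ℕ × (Fin n → ℕ), E.symm z = Fin.cons z.1 z.2 := fun z => rfl
    have hprod : ∀ z : ℕ × (Fin n → ℕ),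
        (∏ j, g j (E.symm z j)) = g 0 z.1 * ∏ j, g j.succ (z.2 j) := by
      intro z
      rw [hEsymm, Fin.prod_univ_succ]
      simp
    have hs2 : Summable fun z : ℕ × (Fin n → ℕ) => ‖g 0 z.1 * ∏ j, g j.succ (z.2 j)‖ := by
      have := summable_mul_of_summable_norm (f := fun k => ‖g 0 k‖)
        (g := fun m : Fin n → ℕ => ‖∏ j, g j.succ (m j)‖)
        (by simpa using hg 0) (by simpa using ihs)
      apply this.congr
      intro z
      simp [norm_mul]
    constructor
    · have : Summable ((fun m : Fin (n+1) → ℕ => ‖∏ j, g j (m j)‖) ∘ E.symm) := by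
        apply hs2.congr
        intro z
        simp only [Function.comp_apply, hprod z]
      exact (E.symm.summable_iff).mp this
    · calc (∑' m : Fin (n+1) → ℕ, ∏ j, g j (m j))
          = ∑' z : ℕ × (Fin n → ℕ), ∏ j, g j (E.symm z j) := (E.symm.tsum_eq _).symm
        _ = ∑' z : ℕ × (Fin n → ℕ), g 0 z.1 * ∏ j, g j.succ (z.2 j) := tsum_congr hprod
        _ = (∑' k, g 0 k) * ∑' m : Fin n → ℕ, ∏ j, g j.succ (m j) :=
            (tsum_mul_tsum_of_summable_norm (hg 0) ihs).symm
        _ = ∏ j, ∑' k, g j k := by rw [ihe, Fin.prod_univ_succ]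


theorem stmt_4 (n : ℕ) (hn : 1 ≤ n) (T : ℝ) (hT : 0 < T)
    (a : Fin n → ℝ) (ha : ∀ j, 0 ≤ a j) :
    Summable (fun m : Fin n → ℕ =>
      (∏ j, (-(T * a j)) ^ m j) / Real.Gamma ((n : ℝ) + (∑ j, (m j : ℝ)) + 1)) ∧
    (∫ u in simplexD n T, Real.exp (-∑ j, a j * u j)) =
      T ^ n * ∑' m : Fin n → ℕ,
        (∏ j, (-(T * a j)) ^ m j) / Real.Gamma ((n : ℝ) + (∑ j, (m j : ℝ)) + 1) := by
  set S := simplexD n T with hS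
  set Nfac : (Fin n → ℕ) → ℕ := fun m => n + ∑ j, m j with hNfac
  set f : (Fin n → ℕ) → (Fin n → ℝ) → ℝ :=
    fun m u => ∏ j, ((-(a j * u j)) ^ m j / ((m j).factorial : ℝ)) with hf
  set C : (Fin n → ℕ) → ℝ := fun m => ∏ j, ((-(a j)) ^ m j / ((m j).factorial : ℝ)) with hC
  set P : (Fin n → ℕ) → (Fin n → ℝ) → ℝ := fun m u => ∏ j, u j ^ m j with hP
  set V : (Fin n → ℕ) → ℝ :=
    fun m => T ^ (Nfac m) * (∏ j, ((m j).factorial : ℝ)) / ((Nfac m).factorial : ℝ) with hV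
  set tf : (Fin n → ℕ) → ℝ :=
    fun m => (∏ j, (-(T * a j)) ^ m j) / ((Nfac m).factorial : ℝ) with htf
  -- Gamma is factorial
  have hGamma : ∀ m : Fin n → ℕ,
      Real.Gamma ((n : ℝ) + (∑ j, (m j : ℝ)) + 1) = ((Nfac m).factorial : ℝ) := by
    intro m
    have h1 : (n : ℝ) + (∑ j, (m j : ℝ)) + 1 = ((Nfac m : ℕ) : ℝ) + 1 := by
      rw [hNfac]; push_cast; ring
    rw [h1, Real.Gamma_nat_eq_factorial]
  -- general computation
  have comp : ∀ (b : Fin n → ℝ) (m : Fin n → ℕ),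
      (∏ j, (b j ^ m j / ((m j).factorial : ℝ))) * V m
        = T ^ n * ((∏ j, (T * b j) ^ m j) / ((Nfac m).factorial : ℝ)) := by
    intro b m
    have h1 : ∏ j, (T * b j) ^ m j = T ^ (∑ j, m j) * ∏ j, b j ^ m j := by
      rw [← Finset.prod_pow_eq_pow_sum, ← Finset.prod_mul_distrib]
      exact Finset.prod_congr rfl fun j _ => mul_pow _ _ _
    have h2 : (∏ j, ((m j).factorial : ℝ)) ≠ 0 := by positivity
    have h3 : ((Nfac m).factorial : ℝ) ≠ 0 := by positivity
    rw [h1, hV, hNfac]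
    simp only
    rw [pow_add, Finset.prod_div_distrib]
    field_simp
  have hCabs : ∀ m : Fin n → ℕ, |C m| = ∏ j, ((a j) ^ m j / ((m j).factorial : ℝ)) := by
    intro m
    rw [hC]
    simp only
    rw [Finset.abs_prod]
    refine Finset.prod_congr rfl fun j _ => ?_
    rw [abs_div, abs_pow, abs_neg, abs_of_nonneg (ha j), Nat.abs_cast]
  have htfabs : ∀ m : Fin n → ℕ,
      |tf m| = (∏ j, (T * a j) ^ m j) / ((Nfac m).factorial : ℝ) := by
    intro m
    rw [htf]
    simp only
    rw [abs_div, Finset.abs_prod, Nat.abs_cast]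
    congr 1
    refine Finset.prod_congr rfl fun j _ => ?_
    rw [abs_pow, abs_neg, abs_of_nonneg (mul_nonneg hT.le (ha j))]
  -- summability
  have hWsum : Summable (fun m : Fin n → ℕ => ∏ j, ((T * a j) ^ m j / ((m j).factorial : ℝ))) := by
    have hg : ∀ j : Fin n, Summable fun k => ‖(T * a j) ^ k / ((k).factorial : ℝ)‖ := by
      intro j
      refine (Real.summable_pow_div_factorial |T * a j|).congr fun k => ?_
      rw [norm_div, norm_pow, Real.norm_eq_abs, Real.norm_natCast]
    exact Summable.of_norm (pi_prod_tsum (fun j k => (T * a j) ^ k / (k.factorial : ℝ)) hg).1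
  have hfacle : ∀ m : Fin n → ℕ,
      (∏ j, ((m j).factorial : ℝ)) ≤ ((Nfac m).factorial : ℝ) := by
    intro m
    have h1 : (∏ j, (m j).factorial) ≤ (Nfac m).factorial := by
      refine le_trans (Nat.le_of_dvd (Nat.factorial_pos _)
        (Nat.prod_factorial_dvd_factorial_sum _ _)) (Nat.factorial_le ?_)
      simp only [hNfac]
      exact Nat.le_add_left _ _
    calc (∏ j, ((m j).factorial : ℝ)) = ((∏ j, (m j).factorial : ℕ) : ℝ) := by push_cast; rfl
      _ ≤ _ := Nat.cast_le.mpr h1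
  have htfle : ∀ m : Fin n → ℕ,
      |tf m| ≤ ∏ j, ((T * a j) ^ m j / ((m j).factorial : ℝ)) := by
    intro m
    rw [htfabs m, Finset.prod_div_distrib]
    refine div_le_div_of_nonneg_left ?_ ?_ (hfacle m)
    · exact Finset.prod_nonneg fun j _ => pow_nonneg (mul_nonneg hT.le (ha j)) _
    · positivity
  have htfsum : Summable tf := by
    refine summable_abs_iff.mp (Summable.of_nonneg_of_le (fun m => abs_nonneg _)
      htfle hWsum)
  have hsumgoal : Summable (fun m : Fin n → ℕ =>
      (∏ j, (-(T * a j)) ^ m j) / Real.Gamma ((n : ℝ) + (∑ j, (m j : ℝ)) + 1)) := by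
    refine htfsum.congr fun m => ?_
    rw [htf, hGamma m]
  refine ⟨hsumgoal, ?_⟩
  -- pointwise expansion
  have hexp : ∀ x : ℝ, Real.exp x = ∑' k : ℕ, x ^ k / (k.factorial : ℝ) := by
    intro x
    rw [Real.exp_eq_exp_ℝ, NormedSpace.exp_eq_tsum_div]
  have hgsum : ∀ (u : Fin n → ℝ) (j : Fin n),
      Summable fun k => ‖(-(a j * u j)) ^ k / ((k).factorial : ℝ)‖ := by
    intro u j
    refine (Real.summable_pow_div_factorial |(-(a j * u j))|).congr fun k => ?_
    rw [norm_div, norm_pow, Real.norm_eq_abs, Real.norm_natCast]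
  have hpt : ∀ u : Fin n → ℝ, Real.exp (-∑ j, a j * u j) = ∑' m : Fin n → ℕ, f m u := by
    intro u
    obtain ⟨_, heq⟩ := pi_prod_tsum (fun j k => (-(a j * u j)) ^ k / (k.factorial : ℝ)) (hgsum u)
    have h1 : (-∑ j, a j * u j) = ∑ j, -(a j * u j) := by
      rw [← Finset.sum_neg_distrib]
    rw [h1, Real.exp_sum, hf]
    simp only
    rw [heq]
    exact Finset.prod_congr rfl fun j _ => hexp _
  -- rewrite f m as constant times monomial
  have hfm : ∀ (m : Fin n → ℕ) (u : Fin n → ℝ), f m u = C m * P m u := by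
    intro m u
    rw [hf, hC, hP]
    simp only
    rw [← Finset.prod_mul_distrib]
    refine Finset.prod_congr rfl fun j _ => ?_
    rw [show -(a j * u j) = (-(a j)) * u j by ring, mul_pow]
    ring
  have hPc : ∀ m : Fin n → ℕ, Continuous (P m) := fun m =>
    continuous_finset_prod _ fun j _ => (continuous_apply j).pow _
  have hfc : ∀ m : Fin n → ℕ, Continuous (f m) := fun m =>
    continuous_finset_prod _ fun j _ =>
      (((continuous_const.mul (continuous_apply j)).neg).pow _).div_const _
  have hmS : MeasurableSet S := measurableSet_simplexD n T
  have hPpos : ∀ (m : Fin n → ℕ) (u : Fin n → ℝ), u ∈ S → 0 ≤ P m u := by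
    intro m u hu
    exact Finset.prod_nonneg fun j _ => pow_nonneg (hu.1 j).le _
  have hdir : ∀ m : Fin n → ℕ,
      ∫⁻ u in S, ENNReal.ofReal (P m u) = ENNReal.ofReal (V m) :=
    fun m => dirichlet n T hT m
  have hV0 : ∀ m : Fin n → ℕ, 0 ≤ V m := by intro m; rw [hV]; positivity
  -- value of each integral
  have hPint : ∀ m : Fin n → ℕ, (∫ u in S, P m u) = V m := by
    intro m
    rw [integral_eq_lintegral_of_nonneg_ae
        ((ae_restrict_iff' hmS).2 (ae_of_all _ (hPpos m)))
        (hPc m).aestronglyMeasurable,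
      hdir m, ENNReal.toReal_ofReal (hV0 m)]
  have hfint : ∀ m : Fin n → ℕ, (∫ u in S, f m u) = T ^ n * tf m := by
    intro m
    calc (∫ u in S, f m u) = ∫ u in S, C m * P m u := by
          exact integral_congr_ae (ae_of_all _ fun u => hfm m u)
      _ = C m * ∫ u in S, P m u := by rw [MeasureTheory.integral_const_mul]
      _ = C m * V m := by rw [hPint m]
      _ = T ^ n * tf m := by
          have h := comp (fun j => -(a j)) m
          rw [htf, hC]
          simp only [mul_neg, neg_mul] at h ⊢
          exact h
  -- lintegral of norms
  have hlint : ∀ m : Fin n → ℕ,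
      (∫⁻ u in S, ‖f m u‖₊ ∂volume) = ENNReal.ofReal (|C m| * V m) := by
    intro m
    have h1 : ∀ᵐ u ∂volume, u ∈ S →
        ((‖f m u‖₊ : ℝ≥0∞)) = ENNReal.ofReal |C m| * ENNReal.ofReal (P m u) := by
      refine ae_of_all _ fun u hu => ?_
      rw [show ((‖f m u‖₊ : ℝ≥0∞)) = ‖f m u‖ₑ from rfl, Real.enorm_eq_ofReal_abs, hfm m u, abs_mul,
        abs_of_nonneg (hPpos m u hu), ENNReal.ofReal_mul (abs_nonneg _)]
    rw [setLIntegral_congr_fun_ae hmS h1,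
      lintegral_const_mul _ ((hPc m).measurable.ennreal_ofReal),
      hdir m, ← ENNReal.ofReal_mul (abs_nonneg _)]
  have habsV : ∀ m : Fin n → ℕ, |C m| * V m = T ^ n * |tf m| := by
    intro m
    rw [hCabs m, htfabs m]
    exact comp a m
  have hsumabs : Summable (fun m : Fin n → ℕ => |C m| * V m) := by
    refine Summable.congr ?_ (fun m => (habsV m).symm)
    exact (htfsum.abs).mul_left (T ^ n)
  have hfin : (∑' m : Fin n → ℕ, ∫⁻ u in S, ‖f m u‖₊ ∂volume) ≠ ⊤ := by
    rw [tsum_congr hlint, ← ENNReal.ofReal_tsum_of_nonneg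
      (fun m => mul_nonneg (abs_nonneg _) (hV0 m)) hsumabs]
    exact ENNReal.ofReal_ne_top
  have hmeas : ∀ m : Fin n → ℕ, AEStronglyMeasurable (f m) (volume.restrict S) :=
    fun m => (hfc m).aestronglyMeasurable
  calc (∫ u in S, Real.exp (-∑ j, a j * u j))
      = ∫ u in S, ∑' m : Fin n → ℕ, f m u :=
        integral_congr_ae (ae_of_all _ fun u => hpt u)
    _ = ∑' m : Fin n → ℕ, ∫ u in S, f m u := integral_tsum hmeas hfin
    _ = ∑' m : Fin n → ℕ, T ^ n * tf m := tsum_congr hfint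
    _ = T ^ n * ∑' m : Fin n → ℕ, tf m := tsum_mul_left
    _ = T ^ n * ∑' m : Fin n → ℕ,
          (∏ j, (-(T * a j)) ^ m j) / Real.Gamma ((n : ℝ) + (∑ j, (m j : ℝ)) + 1) := by
        congr 1
        refine tsum_congr fun m => ?_
        rw [htf, hGamma m]
end

section
/- Let n ≥ 1 be an integer, T > 0, and p_1, ..., p_n > 0. Then ∫_{D^n_T} ∏_{j=1}^n u_j^{p_j - 1} du_1 ⋯ du_n = T^{p_1 + ⋯ + p_n} · (∏_{j=1}^n Γ(p_j)) / Γ(p_1 + ⋯ + p_n + 1). -/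
open MeasureTheory

namespace StmtFiveAux

open Set intervalIntegral

lemma beta_integrable {a b T : ℝ} (ha : 0 < a) (hb : 0 < b) (hT : 0 < T) :
    IntervalIntegrable (fun x => x ^ (a-1) * (T - x) ^ (b-1)) volume 0 T := by
  have key : ∀ a b : ℝ, 0 < a → 0 < b →
      IntervalIntegrable (fun x => x ^ (a-1) * (T - x) ^ (b-1)) volume 0 (T/2) := by
    intro a b ha hb
    apply IntervalIntegrable.mul_continuousOn
    · exact intervalIntegrable_rpow' (by linarith)
    · apply ContinuousOn.rpow_const (continuousOn_const.sub continuousOn_id)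
      intro x hx
      rw [uIcc_of_le (by linarith)] at hx
      exact Or.inl (by simp only [Pi.sub_apply, id_eq]; nlinarith [hx.2])
  refine (key a b ha hb).trans (a := 0) (b := T/2) (c := T) ?_
  have h2 := (key b a hb ha).comp_sub_left T
  simp only [sub_sub_cancel] at h2
  have : T - T/2 = T/2 := by ring
  rw [this, sub_zero] at h2
  refine (h2.congr ?_).symm
  intro x; simp [mul_comm]

lemma real_beta {a b : ℝ} (ha : 0 < a) (hb : 0 < b) {T : ℝ} (hT : 0 < T) :
    ∫ x in Ioo (0:ℝ) T, x ^ (a-1) * (T - x) ^ (b-1) =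
      T ^ (a + b - 1) * (Real.Gamma a * Real.Gamma b / Real.Gamma (a+b)) := by
  have hsc := Complex.betaIntegral_scaled (a:ℂ) (b:ℂ) hT
  have hG := Complex.Gamma_mul_Gamma_eq_betaIntegral
    (s := (a:ℂ)) (t := (b:ℂ)) (by simpa using ha) (by simpa using hb)
  have hGpos : 0 < Real.Gamma (a + b) := Real.Gamma_pos_of_pos (by linarith)
  have hre : (∫ x in (0:ℝ)..T, (x:ℂ) ^ ((a:ℂ) - 1) * ((T:ℂ) - x) ^ ((b:ℂ) - 1)) =
      ((∫ x in Ioo (0:ℝ) T, x ^ (a-1) * (T - x) ^ (b-1) : ℝ) : ℂ) := by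
    rw [intervalIntegral.integral_of_le hT.le, ← integral_Ioc_eq_integral_Ioo]
    refine ((_root_.integral_ofReal (𝕜 := ℂ)).symm.trans
      (setIntegral_congr_fun measurableSet_Ioc fun x hx => ?_)).symm
    show ((x ^ (a - 1) * (T - x) ^ (b - 1) : ℝ) : ℂ) = _
    rw [Complex.ofReal_mul, Complex.ofReal_cpow hx.1.le,
      Complex.ofReal_cpow (by linarith [hx.2] : (0:ℝ) ≤ T - x)]
    push_cast
    ring
  rw [hre] at hsc
  have hbeta : Complex.betaIntegral a b =
      ((Real.Gamma a * Real.Gamma b / Real.Gamma (a+b) : ℝ) : ℂ) := by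
    push_cast
    have h0 : ((Real.Gamma (a+b) : ℝ) : ℂ) ≠ 0 := by exact_mod_cast hGpos.ne'
    rw [eq_div_iff h0, ← Complex.Gamma_ofReal, ← Complex.Gamma_ofReal, ← Complex.Gamma_ofReal,
      Complex.ofReal_add, mul_comm, ← hG]
  rw [hbeta] at hsc
  have hT1 : ((T:ℂ)) ^ ((a:ℂ) + (b:ℂ) - 1) = ((T ^ (a+b-1) : ℝ) : ℂ) := by
    rw [Complex.ofReal_cpow hT.le]
    push_cast
    ring_nf
  rw [hT1, ← Complex.ofReal_mul] at hsc
  exact_mod_cast hsc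

lemma measurableSet_simplexD (n : ℕ) (T : ℝ) : MeasurableSet (simplexD n T) := by
  have : simplexD n T = (⋂ j, {u : Fin n → ℝ | 0 < u j}) ∩ {u | ∑ j, u j < T} := by
    ext u; simp [simplexD]
  rw [this]
  exact (MeasurableSet.iInter fun j =>
      measurableSet_lt measurable_const (measurable_pi_apply j)).inter
    (measurableSet_lt (Finset.measurable_sum _ fun j _ => measurable_pi_apply j)
      measurable_const)

lemma key : ∀ (n : ℕ) (T : ℝ), 0 < T → ∀ (p : Fin n → ℝ), (∀ j, 0 < p j) →
    ∫⁻ u in simplexD n T, ENNReal.ofReal (∏ j, u j ^ (p j - 1)) =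
      ENNReal.ofReal (T ^ (∑ j, p j) * (∏ j, Real.Gamma (p j)) /
        Real.Gamma ((∑ j, p j) + 1)) := by
  intro n
  induction n with
  | zero =>
    intro T hT p hp
    have h1 : simplexD 0 T = Set.univ := by
      ext u; simp [simplexD, hT]
    have h2 : (volume : Measure (Fin 0 → ℝ)) Set.univ = 1 := by
      rw [MeasureTheory.volume_pi, Measure.pi_univ]; simp
    simp [h1, Real.Gamma_one, lintegral_const, h2]
  | succ n ih =>
    intro T hT p hp
    set q : Fin n → ℝ := fun j => p j.succ with hq
    have hq0 : ∀ j, 0 < q j := fun j => hp _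
    set s : ℝ := ∑ j, q j with hs
    have hs0 : 0 ≤ s := Finset.sum_nonneg fun j _ => (hq0 j).le
    have hGs : 0 < Real.Gamma (s + 1) := Real.Gamma_pos_of_pos (by linarith)
    have hGq : 0 < ∏ j, Real.Gamma (q j) :=
      Finset.prod_pos fun j _ => Real.Gamma_pos_of_pos (hq0 j)
    have hC : (0:ℝ) ≤ (∏ j, Real.Gamma (q j)) / Real.Gamma (s + 1) := by positivity
    have hsum : ∑ j, p j = p 0 + s := Fin.sum_univ_succ p
    have hprodG : ∏ j, Real.Gamma (p j) = Real.Gamma (p 0) * ∏ j, Real.Gamma (q j) :=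
      Fin.prod_univ_succ _
    set e := MeasurableEquiv.piFinSuccAbove (fun _ : Fin (n+1) => ℝ) 0 with he
    have hmp : MeasurePreserving e := volume_preserving_piFinSuccAbove (fun _ => ℝ) 0
    set g : ℝ × (Fin n → ℝ) → ENNReal :=
      fun z => ENNReal.ofReal (z.1 ^ (p 0 - 1) * ∏ j, z.2 j ^ (q j - 1)) with hgdef
    set E : Set (ℝ × (Fin n → ℝ)) :=
      {z | z.1 ∈ Ioo (0:ℝ) T ∧ z.2 ∈ simplexD n (T - z.1)} with hEdef
    have hstep1 : ∀ u : Fin (n+1) → ℝ,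
        ENNReal.ofReal (∏ j, u j ^ (p j - 1)) = g (e u) := by
      intro u
      rw [Fin.prod_univ_succ]
      rfl
    have hstep2 : e '' simplexD (n+1) T = E := by
      rw [MeasurableEquiv.image_eq_preimage_symm]
      ext ⟨x, v⟩
      have hsymm : e.symm (x, v) = Fin.cons x v := by
        simp [he, MeasurableEquiv.piFinSuccAbove_symm_apply, Fin.insertNthEquiv,
          Fin.insertNth_zero]
      simp only [Set.mem_preimage, hsymm, hEdef, Set.mem_setOf_eq, Set.mem_Ioo,
        simplexD]
      constructor
      · rintro ⟨h1, h2⟩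
        have hx : 0 < x := by simpa using h1 0
        have hv : ∀ j, 0 < v j := fun j => by simpa using h1 j.succ
        have hsum2 : x + ∑ j, v j < T := by
          rw [Fin.sum_univ_succ] at h2; simpa using h2
        have hvsum : (0:ℝ) ≤ ∑ j, v j := Finset.sum_nonneg fun j _ => (hv j).le
        exact ⟨⟨hx, by linarith⟩, hv, by linarith⟩
      · rintro ⟨⟨hx, _⟩, hv, hsum2⟩
        refine ⟨fun j => ?_, ?_⟩
        · refine Fin.cases ?_ ?_ j
          · simpa using hx
          · intro i; simpa using hv i
        · rw [Fin.sum_univ_succ]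
          simp only [Fin.cons_zero, Fin.cons_succ]
          linarith
    have hEmeas : MeasurableSet E := by
      have hE2 : E = ({z : ℝ × (Fin n → ℝ) | 0 < z.1} ∩ {z | z.1 < T}) ∩
          ((⋂ j, {z : ℝ × (Fin n → ℝ) | 0 < z.2 j}) ∩ {z | ∑ j, z.2 j < T - z.1}) := by
        ext z; simp [hEdef, simplexD]
      rw [hE2]
      refine ((measurableSet_lt measurable_const measurable_fst).inter
        (measurableSet_lt measurable_fst measurable_const)).inter
        ((MeasurableSet.iInter fun j => measurableSet_lt measurable_const
          ((measurable_pi_apply j).comp measurable_snd)).inter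
        (measurableSet_lt (Finset.measurable_sum _ fun j _ =>
          (measurable_pi_apply j).comp measurable_snd)
          (measurable_const.sub measurable_fst)))
    have hgmeas : Measurable g := by
      apply ENNReal.measurable_ofReal.comp
      exact (measurable_fst.pow measurable_const).mul
        (Finset.measurable_prod _ fun j _ =>
          ((measurable_pi_apply j).comp measurable_snd).pow measurable_const)
    have hinner : ∀ x : ℝ, (∫⁻ v, E.indicator g (x, v)) =
        (Ioo (0:ℝ) T).indicator (fun x => ENNReal.ofReal (x ^ (p 0 - 1)) *
          ENNReal.ofReal ((T - x) ^ s * (∏ j, Real.Gamma (q j)) / Real.Gamma (s + 1))) x := by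
      intro x
      by_cases hx : x ∈ Ioo (0:ℝ) T
      · rw [Set.indicator_of_mem hx]
        have heq : ∀ v, E.indicator g (x, v) =
            (simplexD n (T - x)).indicator (fun v => g (x, v)) v := by
          intro v
          by_cases hv : v ∈ simplexD n (T - x)
          · rw [Set.indicator_of_mem (show (x,v) ∈ E from ⟨hx, hv⟩),
              Set.indicator_of_mem hv]
          · rw [Set.indicator_of_notMem (fun h => hv h.2),
              Set.indicator_of_notMem hv]
        rw [lintegral_congr heq, lintegral_indicator (measurableSet_simplexD n (T - x))]
        have hgx : ∀ v : Fin n → ℝ, g (x, v) =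
            ENNReal.ofReal (x ^ (p 0 - 1)) * ENNReal.ofReal (∏ j, v j ^ (q j - 1)) :=
          fun v => ENNReal.ofReal_mul (Real.rpow_nonneg hx.1.le _)
        simp only [hgx]
        rw [lintegral_const_mul' _ _ ENNReal.ofReal_ne_top,
          ih (T - x) (by linarith [hx.2]) q hq0]
      · rw [Set.indicator_of_notMem hx]
        have hzero : ∀ v : Fin n → ℝ, E.indicator g (x, v) = 0 :=
          fun v => Set.indicator_of_notMem (fun h => hx h.1) g
        simp [hzero]
    calc ∫⁻ u in simplexD (n+1) T, ENNReal.ofReal (∏ j, u j ^ (p j - 1))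
        = ∫⁻ u in simplexD (n+1) T, g (e u) := lintegral_congr fun u => hstep1 u
      _ = ∫⁻ z in e '' simplexD (n+1) T, g z :=
          hmp.setLIntegral_comp_emb e.measurableEmbedding g _
      _ = ∫⁻ z in E, g z := by rw [hstep2]
      _ = ∫⁻ z, E.indicator g z := (lintegral_indicator hEmeas g).symm
      _ = ∫⁻ x, ∫⁻ v, E.indicator g (x, v) := by
          rw [MeasureTheory.Measure.volume_eq_prod _ _,
            MeasureTheory.lintegral_prod _ (hgmeas.indicator hEmeas).aemeasurable]
      _ = ∫⁻ x in Ioo (0:ℝ) T, ENNReal.ofReal (x ^ (p 0 - 1)) *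
            ENNReal.ofReal ((T - x) ^ s * (∏ j, Real.Gamma (q j)) / Real.Gamma (s + 1)) := by
          rw [lintegral_congr hinner, lintegral_indicator measurableSet_Ioo]
      _ = ENNReal.ofReal ((∏ j, Real.Gamma (q j)) / Real.Gamma (s + 1)) *
            ∫⁻ x in Ioo (0:ℝ) T, ENNReal.ofReal (x ^ (p 0 - 1) * (T - x) ^ ((s+1) - 1)) := by
          rw [← lintegral_const_mul' _ _ ENNReal.ofReal_ne_top]
          apply setLIntegral_congr_fun measurableSet_Ioo
          intro x hx
          dsimp only
          rw [← ENNReal.ofReal_mul (Real.rpow_nonneg hx.1.le _), ← ENNReal.ofReal_mul hC]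
          congr 1
          rw [add_sub_cancel_right]
          ring
      _ = ENNReal.ofReal ((∏ j, Real.Gamma (q j)) / Real.Gamma (s + 1)) *
            ENNReal.ofReal (∫ x in Ioo (0:ℝ) T, x ^ (p 0 - 1) * (T - x) ^ ((s+1) - 1)) := by
          congr 1
          have hInt : IntegrableOn (fun x => x ^ (p 0 - 1) * (T - x) ^ ((s+1) - 1))
              (Ioo (0:ℝ) T) := by
            have h5 := beta_integrable (hp 0) (by linarith : (0:ℝ) < s + 1) hT
            rw [intervalIntegrable_iff_integrableOn_Ioc_of_le hT.le] at h5
            exact h5.mono_set Ioo_subset_Ioc_self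
          rw [← ofReal_integral_eq_lintegral_ofReal hInt]
          exact (ae_restrict_iff' measurableSet_Ioo).2 (Filter.Eventually.of_forall
            fun x hx => mul_nonneg (Real.rpow_nonneg hx.1.le _)
              (Real.rpow_nonneg (by linarith [hx.2]) _))
      _ = ENNReal.ofReal (T ^ (∑ j, p j) * (∏ j, Real.Gamma (p j)) /
            Real.Gamma ((∑ j, p j) + 1)) := by
          rw [real_beta (hp 0) (by linarith : (0:ℝ) < s + 1) hT,
            ← ENNReal.ofReal_mul hC]
          congr 1
          rw [hsum, hprodG]
          have he1 : p 0 + (s + 1) - 1 = p 0 + s := by ring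
          have he2 : p 0 + s + 1 = p 0 + (s + 1) := by ring
          have hG2 : 0 < Real.Gamma (p 0 + (s + 1)) :=
            Real.Gamma_pos_of_pos (by have := hp 0; linarith)
          rw [he1, he2]
          field_simp

end StmtFiveAux

theorem stmt_5 (n : ℕ) (hn : 1 ≤ n) (T : ℝ) (hT : 0 < T)
    (p : Fin n → ℝ) (hp : ∀ j, 0 < p j) :
    (∫ u in simplexD n T, ∏ j, u j ^ (p j - 1)) =
      T ^ (∑ j, p j) * (∏ j, Real.Gamma (p j)) / Real.Gamma ((∑ j, p j) + 1) := by
  have hkey := StmtFiveAux.key n T hT p hp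
  have hmeas := StmtFiveAux.measurableSet_simplexD n T
  have hnn : ∀ᵐ u ∂(volume.restrict (simplexD n T)), 0 ≤ ∏ j, u j ^ (p j - 1) := by
    rw [ae_restrict_iff' hmeas]
    exact Filter.Eventually.of_forall fun u hu =>
      Finset.prod_nonneg fun j _ => Real.rpow_nonneg (hu.1 j).le _
  have hm : AEStronglyMeasurable (fun u : Fin n → ℝ => ∏ j, u j ^ (p j - 1))
      (volume.restrict (simplexD n T)) := by
    apply Measurable.aestronglyMeasurable
    exact Finset.measurable_prod _ fun j _ => (measurable_pi_apply j).pow measurable_const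
  rw [MeasureTheory.integral_eq_lintegral_of_nonneg_ae hnn hm, hkey, ENNReal.toReal_ofReal]
  have hsp : (0:ℝ) ≤ ∑ j, p j := Finset.sum_nonneg fun j _ => (hp j).le
  have h1 : 0 < ∏ j, Real.Gamma (p j) :=
    Finset.prod_pos fun j _ => Real.Gamma_pos_of_pos (hp j)
  have h2 : 0 < Real.Gamma ((∑ j, p j) + 1) := Real.Gamma_pos_of_pos (by linarith)
  exact div_nonneg (mul_nonneg (Real.rpow_nonneg hT.le _) h1.le) h2.le
end

section
/- Let z ∈ ℂ be nonzero with arg z ∈ [-3π/4, 3π/4] (principal argument) and let A ≥ 0 be a real number. Then 1/|z + A| ≤ 4/(|z| + A); equivalently, |z + A| ≥ (|z| + A)/4. -/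
theorem stmt_6 (z : ℂ) (hz : z ≠ 0)
    (harg : z.arg ∈ Set.Icc (-(3 * Real.pi / 4)) (3 * Real.pi / 4))
    (A : ℝ) (hA : 0 ≤ A) :
    1 / ‖z + (A : ℂ)‖ ≤ 4 / (‖z‖ + A) ∧
      (‖z‖ + A) / 4 ≤ ‖z + (A : ℂ)‖ := by
  obtain ⟨h1, h2⟩ := harg
  have hr : 0 < ‖z‖ := norm_pos_iff.mpr hz
  set r := ‖z‖ with hrdef
  have hcos34 : Real.cos (3 * Real.pi / 4) = -(Real.sqrt 2 / 2) := by
    rw [show (3 * Real.pi / 4) = Real.pi - Real.pi / 4 by ring, Real.cos_pi_sub,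
      Real.cos_pi_div_four]
  have habs : |z.arg| ≤ 3 * Real.pi / 4 := abs_le.mpr ⟨h1, h2⟩
  have hcosge : -(Real.sqrt 2 / 2) ≤ Real.cos z.arg := by
    rw [← hcos34, ← Real.cos_abs z.arg]
    apply Real.cos_le_cos_of_nonneg_of_le_pi (abs_nonneg _) _ habs
    nlinarith [Real.pi_pos]
  have hre : z.re = r * Real.cos z.arg := by
    rw [Complex.cos_arg hz, ← hrdef]
    field_simp
  have hrebound : -(Real.sqrt 2 / 2) * r ≤ z.re := by
    rw [hre]
    nlinarith
  have hsq : z.re ^ 2 + z.im ^ 2 = r ^ 2 := by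
    rw [hrdef, Complex.sq_norm, Complex.normSq_apply]; ring
  have habsadd : ‖z + A‖ ^ 2 = (z.re + A) ^ 2 + z.im ^ 2 := by
    rw [← Complex.normSq_eq_norm_sq, Complex.normSq_apply]
    simp [Complex.add_re, Complex.add_im]
    ring
  have hsqrt2 : Real.sqrt 2 ≤ 1.5 := by
    rw [show (1.5 : ℝ) = Real.sqrt (1.5 ^ 2) by rw [Real.sqrt_sq]; norm_num]
    apply Real.sqrt_le_sqrt; norm_num
  have key : (r + A) / 4 ≤ ‖z + A‖ := by
    have h0 : 0 ≤ ‖z + A‖ := norm_nonneg _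
    have hsq2 : ((r + A) / 4) ^ 2 ≤ ‖z + A‖ ^ 2 := by
      rw [habsadd]
      nlinarith [sq_nonneg (r - A), Real.sqrt_nonneg 2]
    exact (pow_le_pow_iff_left₀ (by positivity) h0 two_ne_zero).mp hsq2
  refine ⟨?_, key⟩
  have hpos : 0 < ‖z + A‖ := by
    have : 0 < (r + A) / 4 := by positivity
    linarith
  rw [div_le_div_iff₀ hpos (by positivity)]
  linarith
end

section
/- Let z ∈ ℂ be nonzero with arg z ∈ [-3π/4, 3π/4] (principal argument), and let A : ℝ → ℝ be a measurable function with A(v) ≥ 0 for all v, such that the function v ↦ 1/(|z| + A(v)) is integrable on ℝ. Then |∫_ℝ 1/(z + A(v)) dv| ≥ (1/4) ∫_ℝ 1/(|z| + A(v)) dv. -/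
open MeasureTheory Complex

lemma cos_half_ge (θ : ℝ) (h : θ ∈ Set.Icc (-(3 * Real.pi / 4)) (3 * Real.pi / 4)) :
    (1/4 : ℝ) ≤ Real.cos (θ/2) := by
  have h1 : 1 - (θ/2)^2/2 ≤ Real.cos (θ/2) := Real.one_sub_sq_div_two_le_cos
  have hπ : Real.pi < 3.15 := Real.pi_lt_d2
  obtain ⟨hl, hr⟩ := h
  nlinarith [Real.pi_pos]

lemma ne_zero_key (z : ℂ) (hz : z ≠ 0)
    (harg : z.arg ∈ Set.Icc (-(3 * Real.pi / 4)) (3 * Real.pi / 4))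
    (a : ℝ) (ha : 0 ≤ a) : z + (a:ℂ) ≠ 0 := by
  intro h
  have hzz : z = ((-a : ℝ) : ℂ) := by push_cast; linear_combination h
  have han : (-a : ℝ) < 0 := by
    rcases lt_or_eq_of_le ha with h' | h'
    · linarith
    · exfalso; apply hz; rw [hzz, ← h']; simp
  have hπ : z.arg = Real.pi := by rw [hzz, Complex.arg_ofReal_of_neg han]
  have h2 := harg.2
  rw [hπ] at h2
  linarith [Real.pi_pos]

lemma key (z : ℂ) (hz : z ≠ 0)
    (harg : z.arg ∈ Set.Icc (-(3 * Real.pi / 4)) (3 * Real.pi / 4))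
    (a : ℝ) (ha : 0 ≤ a) :
    (1/4 : ℝ) * (1/(‖z‖ + a)) ≤
      (Complex.exp ((z.arg/2 : ℝ) * Complex.I) * (z + (a:ℂ))⁻¹).re := by
  have hrpos : 0 < ‖z‖ := norm_pos_iff.mpr hz
  have hza : z + (a:ℂ) ≠ 0 := ne_zero_key z hz harg a ha
  have hN : 0 < Complex.normSq (z + (a:ℂ)) := Complex.normSq_pos.2 hza
  set θ := z.arg with hθ
  set r := ‖z‖ with hr
  set N := Complex.normSq (z + (a:ℂ)) with hNdef
  -- compute the real part
  have hre : (Complex.exp ((θ/2 : ℝ) * Complex.I) * (z + (a:ℂ))⁻¹).re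
      = (r + a) * Real.cos (θ/2) / N := by
    have h1 : ((z + (a:ℂ))⁻¹).re = (z.re + a) / N := by
      rw [Complex.inv_re]; simp [hNdef]
    have h2 : ((z + (a:ℂ))⁻¹).im = -z.im / N := by
      rw [Complex.inv_im]; simp [hNdef]
    rw [Complex.mul_re, h1, h2, Complex.exp_ofReal_mul_I_re, Complex.exp_ofReal_mul_I_im]
    have hre' : z.re = r * Real.cos θ := (Complex.norm_mul_cos_arg z).symm
    have him' : z.im = r * Real.sin θ := (Complex.norm_mul_sin_arg z).symm
    have hhalf : Real.cos θ * Real.cos (θ/2) + Real.sin θ * Real.sin (θ/2)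
        = Real.cos (θ/2) := by
      rw [← Real.cos_sub]; ring_nf
    rw [hre', him']
    field_simp
    linear_combination r * hhalf
  rw [hre]
  have hNle : N ≤ (r + a)^2 := by
    have : N = r^2 + 2*a*(r * Real.cos θ) + a^2 := by
      rw [hNdef, Complex.normSq_apply]
      simp only [Complex.add_re, Complex.add_im, Complex.ofReal_re, Complex.ofReal_im]
      have hre' : z.re = r * Real.cos θ := (Complex.norm_mul_cos_arg z).symm
      have him' : z.im = r * Real.sin θ := (Complex.norm_mul_sin_arg z).symm
      rw [hre', him']
      have hs : (Real.sin θ)^2 = 1 - (Real.cos θ)^2 := by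
        have := Real.sin_sq_add_cos_sq θ; linarith
      nlinarith [hs]
    rw [this]
    have hc1 : Real.cos θ ≤ 1 := Real.cos_le_one θ
    nlinarith [mul_nonneg ha hrpos.le]
  have hc : (1/4 : ℝ) ≤ Real.cos (θ/2) := cos_half_ge θ harg
  have hr1 : (1/4:ℝ) * (1/(r+a)) = (1/4)/(r+a) := by ring
  rw [hr1, div_le_div_iff₀ (by linarith : (0:ℝ) < r+a) hN]
  nlinarith [mul_le_mul_of_nonneg_left hNle (by norm_num : (0:ℝ) ≤ 1/4),
    mul_le_mul_of_nonneg_right hc (sq_nonneg (r+a))]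

theorem stmt_7 (z : ℂ) (hz : z ≠ 0)
    (harg : z.arg ∈ Set.Icc (-(3 * Real.pi / 4)) (3 * Real.pi / 4))
    (A : ℝ → ℝ) (hAm : Measurable A) (hA : ∀ v, 0 ≤ A v)
    (hint : Integrable (fun v : ℝ => 1 / (‖z‖ + A v))) :
    (1 / 4) * ∫ v : ℝ, 1 / (‖z‖ + A v) ≤
      ‖∫ v : ℝ, 1 / (z + (A v : ℂ))‖ := by
  simp only [one_div]
  set θ := z.arg with hθ
  set r := ‖z‖ with hr
  set w := Complex.exp ((θ/2 : ℝ) * Complex.I) with hw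
  have hrpos : 0 < r := norm_pos_iff.mpr hz
  -- cos θ ≥ -√2/2
  have hcos : -(Real.sqrt 2/2) ≤ Real.cos θ := by
    have habs : |θ| ≤ 3 * Real.pi / 4 := abs_le.2 ⟨by linarith [harg.1], harg.2⟩
    have h34 : (3 * Real.pi / 4 : ℝ) ≤ Real.pi := by linarith [Real.pi_pos]
    have := Real.cos_le_cos_of_nonneg_of_le_pi (abs_nonneg θ) h34 habs
    rw [Real.cos_abs] at this
    have hc34 : Real.cos (3 * Real.pi / 4) = -(Real.sqrt 2/2) := by
      have h : (3 * Real.pi / 4 : ℝ) = Real.pi - Real.pi/4 := by ring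
      rw [h, Real.cos_pi_sub, Real.cos_pi_div_four]
    rw [hc34] at this
    exact this
  have hsqrt2 : Real.sqrt 2 ≤ 1.5 := by
    nlinarith [Real.sq_sqrt (by norm_num : (0:ℝ) ≤ 2), Real.sqrt_nonneg 2]
  -- lower bound for |z + a|
  have habs : ∀ v, (r + A v)/4 ≤ ‖z + (A v : ℂ)‖ := by
    intro v
    set a := A v with ha'
    have ha : 0 ≤ a := hA v
    have hNeq : Complex.normSq (z + (a:ℂ)) = r^2 + 2*a*(r * Real.cos θ) + a^2 := by
      rw [Complex.normSq_apply]
      simp only [Complex.add_re, Complex.add_im, Complex.ofReal_re, Complex.ofReal_im]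
      have hre' : z.re = r * Real.cos θ := (Complex.norm_mul_cos_arg z).symm
      have him' : z.im = r * Real.sin θ := (Complex.norm_mul_sin_arg z).symm
      rw [hre', him']
      have hs : (Real.sin θ)^2 = 1 - (Real.cos θ)^2 := by
        have := Real.sin_sq_add_cos_sq θ; linarith
      nlinarith [hs]
    rw [Complex.norm_def]
    rw [show (r + a)/4 = Real.sqrt (((r+a)/4)^2) by
      rw [Real.sqrt_sq (by positivity)]]
    apply Real.sqrt_le_sqrt
    rw [hNeq]
    nlinarith [mul_nonneg ha hrpos.le, sq_nonneg (r - a),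
      mul_le_mul_of_nonneg_left hcos (mul_nonneg ha hrpos.le),
      mul_le_mul_of_nonneg_right hsqrt2 (mul_nonneg ha hrpos.le)]
  -- integrability
  have hmeas : AEStronglyMeasurable (fun v : ℝ => (z + (A v : ℂ))⁻¹) volume :=
    (((Complex.measurable_ofReal.comp hAm).const_add z).inv).aestronglyMeasurable
  have hint2 : Integrable (fun v : ℝ => (z + (A v : ℂ))⁻¹) := by
    apply Integrable.mono (hint.const_mul 4) hmeas
    filter_upwards with v
    have ha : 0 ≤ A v := hA v
    have h1 : (0:ℝ) < (r + A v)/4 := by positivity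
    have h2 : ‖(z + (A v : ℂ))⁻¹‖ = (‖z + (A v : ℂ)‖)⁻¹ := by
      rw [norm_inv]
    rw [h2]
    have h3 : (‖z + (A v : ℂ)‖)⁻¹ ≤ ((r + A v)/4)⁻¹ :=
      inv_anti₀ h1 (habs v)
    have h4 : ‖(4:ℝ) * (1/(r + A v))‖ = 4 * (1/(r + A v)) := by
      rw [Real.norm_eq_abs, _root_.abs_of_nonneg (by positivity)]
    rw [h4]
    calc (‖z + (A v : ℂ)‖)⁻¹ ≤ ((r + A v)/4)⁻¹ := h3
      _ = 4 * (1/(r + A v)) := by field_simp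
  have hintw : Integrable (fun v : ℝ => w * (z + (A v : ℂ))⁻¹) := hint2.const_mul w
  -- chain of inequalities
  have h0 : (1/4 : ℝ) * ∫ v : ℝ, 1/(r + A v) = ∫ v : ℝ, (1/4) * (1/(r + A v)) :=
    (integral_const_mul _ _).symm
  have h1 : ∫ v : ℝ, (1/4 : ℝ) * (1/(r + A v))
      ≤ ∫ v : ℝ, (w * (z + (A v : ℂ))⁻¹).re := by
    apply integral_mono (by simpa [one_div] using hint.const_mul (1/4 : ℝ)) hintw.re
    intro v
    exact key z hz harg (A v) (hA v)
  have h2 : ∫ v : ℝ, (w * (z + (A v : ℂ))⁻¹).re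
      = (∫ v : ℝ, w * (z + (A v : ℂ))⁻¹).re := by
    simpa using integral_re hintw
  have h3 : (∫ v : ℝ, w * (z + (A v : ℂ))⁻¹).re
      ≤ ‖∫ v : ℝ, w * (z + (A v : ℂ))⁻¹‖ := Complex.re_le_norm _
  have h4 : ‖∫ v : ℝ, w * (z + (A v : ℂ))⁻¹‖
      = ‖∫ v : ℝ, (z + (A v : ℂ))⁻¹‖ := by
    rw [integral_const_mul, norm_mul, hw, Complex.norm_exp_ofReal_mul_I, one_mul]
  simp only [one_div] at h0 h1 ⊢
  linarith [h0, h1, h2.le, h3, h4.le, h4.ge]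
end

section
/- Let T > 0 and α₁, α₂ ∈ (0,2] with max{α₁,α₂} > 1. For every nonzero z ∈ ℂ with arg z ∈ [-3π/4, 3π/4], one has |Φ(z)| ≤ (∫_ℝ 4/(1 + T|v|^{max{α₁,α₂}}) dv) · |z|^{1/max{α₁,α₂} − 1}. -/
open MeasureTheory

/-- `Φ(z) = ∫_ℝ 1/(z + T|v|^{α₁} + T|v|^{α₂}) dv`. -/
noncomputable def Phi (T α₁ α₂ : ℝ) (z : ℂ) : ℂ :=
  ∫ v : ℝ, (z + ((T * |v| ^ α₁ + T * |v| ^ α₂ : ℝ) : ℂ))⁻¹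

lemma integ_aux {T a α : ℝ} (hT : 0 < T) (ha : 0 < a) (hα1 : 1 < α) (hα2 : α ≤ 2) :
    Integrable (fun v : ℝ => (a + T * |v| ^ α)⁻¹) := by
  have hα0 : (0:ℝ) < α := by linarith
  have hcont : Continuous fun v : ℝ => (a + T * |v| ^ α)⁻¹ := by
    apply Continuous.inv₀
    · exact continuous_const.add (continuous_const.mul
        (continuous_abs.rpow_const fun x => Or.inr hα0.le))
    · intro x; positivity
  have hm : (0:ℝ) < min a T := lt_min ha hT
  have hint : Integrable (fun v : ℝ => (4 / min a T) * (1 + ‖v‖) ^ (-α)) := by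
    refine Integrable.const_mul ?_ _
    exact integrable_one_add_norm (by simpa using hα1)
  refine hint.mono' hcont.aestronglyMeasurable (Filter.Eventually.of_forall fun v => ?_)
  have hpos : (0:ℝ) < a + T * |v| ^ α := by positivity
  have h1v : (0:ℝ) < 1 + |v| := by positivity
  have h2a : (2:ℝ) ^ α ≤ 4 := by
    calc (2:ℝ) ^ α ≤ 2 ^ (2:ℝ) := Real.rpow_le_rpow_of_exponent_le one_le_two hα2
      _ = 4 := by
        rw [show (2:ℝ) = ((2:ℕ):ℝ) by norm_num, Real.rpow_natCast]; norm_num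
  have key : (min a T / 4) * (1 + |v|) ^ α ≤ a + T * |v| ^ α := by
    have hma : min a T ≤ a := min_le_left _ _
    have hmT : min a T ≤ T := min_le_right _ _
    rcases le_or_gt (|v|) 1 with h | h
    · have h4 : (1 + |v|) ^ α ≤ 4 := by
        calc (1 + |v|) ^ α ≤ 2 ^ α :=
              Real.rpow_le_rpow (by positivity) (by linarith) hα0.le
          _ ≤ 4 := h2a
      have hTn : 0 ≤ T * |v| ^ α := by positivity
      nlinarith
    · have h4 : (1 + |v|) ^ α ≤ 4 * |v| ^ α := by
        have hle : (1 + |v|) ^ α ≤ (2 * |v|) ^ α :=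
          Real.rpow_le_rpow (by positivity) (by linarith) hα0.le
        rw [Real.mul_rpow (by norm_num) (abs_nonneg v)] at hle
        have hv0 : (0:ℝ) ≤ |v| ^ α := by positivity
        nlinarith
      have hv0 : (0:ℝ) ≤ |v| ^ α := by positivity
      nlinarith
  have hkeypos : (0:ℝ) < (min a T / 4) * (1 + |v|) ^ α := by positivity
  rw [Real.norm_eq_abs, abs_of_pos (by positivity), Real.norm_eq_abs,
    Real.rpow_neg h1v.le]
  calc (a + T * |v| ^ α)⁻¹ ≤ ((min a T / 4) * (1 + |v|) ^ α)⁻¹ :=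
        inv_anti₀ hkeypos key
    _ = (4 / min a T) * ((1 + |v|) ^ α)⁻¹ := by
        rw [mul_inv, inv_div]

lemma point_bound {z : ℂ} (hz : z ≠ 0)
    (hre : -(Real.sqrt 2 / 2) * ‖z‖ ≤ z.re)
    {s s' : ℝ} (hs' : 0 ≤ s') (hss : s' ≤ s) :
    ‖(z + (s : ℂ))⁻¹‖ ≤ 3 * (‖z‖ + s')⁻¹ := by
  set a := ‖z‖ with ha
  have ha0 : 0 < a := norm_pos_iff.mpr hz
  have hsq : Real.sqrt 2 ^ 2 = 2 := Real.sq_sqrt (by norm_num)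
  have hsnn : 0 ≤ Real.sqrt 2 := Real.sqrt_nonneg 2
  have habs2 : ‖z + (s:ℂ)‖ ^ 2 = (z.re + s) ^ 2 + z.im ^ 2 := by
    rw [Complex.sq_norm, Complex.normSq_apply]
    simp [Complex.add_re, Complex.add_im]
    ring
  have ha2 : a ^ 2 = z.re ^ 2 + z.im ^ 2 := by
    rw [ha, Complex.sq_norm, Complex.normSq_apply]; ring
  have hkey : (a + s') ^ 2 ≤ 9 * ‖z + (s:ℂ)‖ ^ 2 := by
    rw [habs2]
    have hs0 : (0:ℝ) ≤ s := le_trans hs' hss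
    have hs2 : Real.sqrt 2 ≤ 3 / 2 := by nlinarith
    have hsre : -(Real.sqrt 2 / 2) * a * s ≤ z.re * s :=
      mul_le_mul_of_nonneg_right hre hs0
    have has : (0:ℝ) ≤ a * s := mul_nonneg ha0.le hs0
    have hprod : Real.sqrt 2 * (a * s) ≤ (3 / 2) * (a * s) :=
      mul_le_mul_of_nonneg_right hs2 has
    have hsq' : (a + s') ^ 2 ≤ (a + s) ^ 2 := by nlinarith
    nlinarith [sq_nonneg (a - s)]
  have hw : 0 < ‖z + (s:ℂ)‖ := by
    nlinarith [norm_nonneg (z + (s:ℂ))]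
  have h3 : a + s' ≤ 3 * ‖z + (s:ℂ)‖ := by
    nlinarith [norm_nonneg (z + (s:ℂ))]
  rw [norm_inv]
  have hd : 0 < (a + s') / 3 := by positivity
  have := inv_anti₀ hd (by linarith : (a + s') / 3 ≤ ‖z + (s:ℂ)‖)
  rwa [inv_div] at this

lemma subst_aux {T r α : ℝ} (hr : 0 < r) (hα : 0 < α) :
    ∫ v : ℝ, (r + T * |v| ^ α)⁻¹ =
      r ^ (1 / α - 1) * ∫ v : ℝ, (1 + T * |v| ^ α)⁻¹ := by
  set c := r ^ (1 / α) with hc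
  have hc0 : 0 < c := Real.rpow_pos_of_pos hr _
  have hca : c ^ α = r := by
    rw [hc, ← Real.rpow_mul hr.le, one_div, inv_mul_cancel₀ hα.ne', Real.rpow_one]
  have key : ∀ u : ℝ, (r + T * |c * u| ^ α)⁻¹ = r⁻¹ * (1 + T * |u| ^ α)⁻¹ := by
    intro u
    rw [abs_mul, abs_of_pos hc0, Real.mul_rpow hc0.le (abs_nonneg u), hca, ← mul_inv]
    congr 1
    ring
  have h := MeasureTheory.Measure.integral_comp_mul_left
    (fun v : ℝ => (r + T * |v| ^ α)⁻¹) c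
  simp only [key, smul_eq_mul] at h
  rw [integral_const_mul, abs_of_pos (inv_pos.2 hc0)] at h
  have : ∫ v : ℝ, (r + T * |v| ^ α)⁻¹ =
      c * (r⁻¹ * ∫ u : ℝ, (1 + T * |u| ^ α)⁻¹) := by
    rw [h, ← mul_assoc, mul_inv_cancel₀ hc0.ne', one_mul]
  rw [this, ← mul_assoc]
  congr 1
  rw [hc, Real.rpow_sub hr, Real.rpow_one]
  ring

theorem stmt_8 (T α₁ α₂ : ℝ) (hT : 0 < T)
    (h1 : α₁ ∈ Set.Ioc (0 : ℝ) 2) (h2 : α₂ ∈ Set.Ioc (0 : ℝ) 2) (hmax : 1 < max α₁ α₂)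
    (z : ℂ) (hz : z ≠ 0)
    (harg : z.arg ∈ Set.Icc (-(3 * Real.pi / 4)) (3 * Real.pi / 4)) :
    ‖Phi T α₁ α₂ z‖ ≤
      (∫ v : ℝ, 4 / (1 + T * |v| ^ max α₁ α₂)) *
        ‖z‖ ^ (1 / max α₁ α₂ - 1) := by
  set α := max α₁ α₂ with hα
  have hα1 : 1 < α := hmax
  have hα2 : α ≤ 2 := max_le h1.2 h2.2
  have hα0 : (0:ℝ) < α := by linarith
  set r := ‖z‖ with hr
  have hr0 : 0 < r := norm_pos_iff.mpr hz
  -- real part lower bound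
  have hpi : (0:ℝ) < Real.pi := Real.pi_pos
  have hcos34 : Real.cos (3 * Real.pi / 4) = -(Real.sqrt 2 / 2) := by
    rw [show (3 * Real.pi / 4 : ℝ) = Real.pi - Real.pi / 4 by ring,
      Real.cos_pi_sub, Real.cos_pi_div_four]
  have hcos : Real.cos (3 * Real.pi / 4) ≤ Real.cos z.arg := by
    rw [← Real.cos_abs z.arg]
    exact Real.cos_le_cos_of_nonneg_of_le_pi (abs_nonneg _) (by linarith)
      (abs_le.2 ⟨harg.1, harg.2⟩)
  have hre : -(Real.sqrt 2 / 2) * r ≤ z.re := by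
    have h := Complex.norm_mul_cos_arg z
    rw [← h, ← hr]
    rw [hcos34] at hcos
    nlinarith
  -- pointwise domination
  have hS : ∀ v : ℝ, T * |v| ^ α ≤ T * |v| ^ α₁ + T * |v| ^ α₂ := by
    intro v
    have h1' : (0:ℝ) ≤ T * |v| ^ α₁ := by positivity
    have h2' : (0:ℝ) ≤ T * |v| ^ α₂ := by positivity
    rcases max_choice α₁ α₂ with h | h <;> rw [hα, h] <;> linarith
  have hint : Integrable (fun v : ℝ => (r + T * |v| ^ α)⁻¹) :=
    integ_aux hT hr0 hα1 hα2
  have step1 : ‖Phi T α₁ α₂ z‖ ≤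
      ∫ v : ℝ, 3 * (r + T * |v| ^ α)⁻¹ := by
    calc ‖Phi T α₁ α₂ z‖
        ≤ ∫ v : ℝ, ‖(z + ((T * |v| ^ α₁ + T * |v| ^ α₂ : ℝ) : ℂ))⁻¹‖ := by
          rw [Phi]
          exact norm_integral_le_integral_norm _
      _ ≤ ∫ v : ℝ, 3 * (r + T * |v| ^ α)⁻¹ := by
          refine integral_mono_of_nonneg
            (Filter.Eventually.of_forall fun v => norm_nonneg _)
            (hint.const_mul 3) (Filter.Eventually.of_forall fun v => ?_)
          have hs'0 : (0:ℝ) ≤ T * |v| ^ α := by positivity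
          exact point_bound hz hre hs'0 (hS v)
  have step2 : ∫ v : ℝ, 3 * (r + T * |v| ^ α)⁻¹ =
      3 * (r ^ (1 / α - 1) * ∫ v : ℝ, (1 + T * |v| ^ α)⁻¹) := by
    rw [integral_const_mul, subst_aux hr0 hα0]
  have hI : (0:ℝ) ≤ ∫ v : ℝ, (1 + T * |v| ^ α)⁻¹ :=
    integral_nonneg fun v => by positivity
  have hRHS : (∫ v : ℝ, 4 / (1 + T * |v| ^ α)) =
      4 * ∫ v : ℝ, (1 + T * |v| ^ α)⁻¹ := by
    rw [← integral_const_mul]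
    simp [div_eq_mul_inv]
  rw [hRHS]
  have hrp : (0:ℝ) < r ^ (1 / α - 1) := Real.rpow_pos_of_pos hr0 _
  calc ‖Phi T α₁ α₂ z‖
      ≤ 3 * (r ^ (1 / α - 1) * ∫ v : ℝ, (1 + T * |v| ^ α)⁻¹) := step1.trans_eq step2
    _ ≤ (4 * ∫ v : ℝ, (1 + T * |v| ^ α)⁻¹) * r ^ (1 / α - 1) := by nlinarith
end

section
/- Let T > 0 and α₁, α₂ ∈ (0,2] with max{α₁,α₂} > 1. For every nonzero z ∈ ℂ with arg z ∈ [-3π/4, 3π/4], one has |Φ(z)| ≥ (1/4) (∫_ℝ 1/(1 + T|v|^{α₁} + T|v|^{α₂}) dv) · min{|z|^{1/max{α₁,α₂} − 1}, 1}. -/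
open MeasureTheory

section stmt9aux
open Real Set


lemma cos_add_sin_nonneg {t : ℝ} (h0 : 0 ≤ t) (h1 : t ≤ 3 * Real.pi / 4) :
    0 ≤ Real.cos t + Real.sin t := by
  have hpi := Real.pi_pos
  have h := Real.cos_nonneg_of_mem_Icc (x := t - Real.pi / 4)
    ⟨by linarith, by linarith⟩
  rw [Real.cos_sub, Real.cos_pi_div_four, Real.sin_pi_div_four] at h
  have h2 : (0:ℝ) < Real.sqrt 2 := Real.sqrt_pos.mpr (by norm_num)
  nlinarith

lemma re_add_abs_im_nonneg (z : ℂ) (hz : z ≠ 0)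
    (harg : z.arg ∈ Set.Icc (-(3 * Real.pi / 4)) (3 * Real.pi / 4)) :
    0 ≤ z.re + |z.im| := by
  have hr : 0 < ‖z‖ := norm_pos_iff.mpr hz
  have hre : z.re = ‖z‖ * Real.cos z.arg := by
    rw [Complex.cos_arg hz]; field_simp
  have him : z.im = ‖z‖ * Real.sin z.arg := by
    rw [Complex.sin_arg]; field_simp
  rw [hre, him, abs_mul, abs_of_pos hr, ← mul_add]
  apply mul_nonneg hr.le
  rcases le_or_gt 0 z.arg with h | h
  · have := cos_add_sin_nonneg h harg.2
    have := le_abs_self (Real.sin z.arg)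
    linarith
  · have h0 : 0 ≤ -z.arg := by linarith
    have h1 : -z.arg ≤ 3 * Real.pi / 4 := by linarith [harg.1]
    have := cos_add_sin_nonneg h0 h1
    rw [Real.cos_neg, Real.sin_neg] at this
    have := neg_le_abs (Real.sin z.arg)
    linarith

lemma key_real {r x y g : ℝ} (hr : 0 < r) (hr2 : x ^ 2 + y ^ 2 = r ^ 2)
    (hxy : 0 ≤ x + |y|) (hg : 0 ≤ g) :
    r * ((x + g) ^ 2 + y ^ 2) ^ 2 ≤ 8 * (r + x) * (r + g) ^ 4 := by
  have hy2 : y ^ 2 ≤ r ^ 2 := by nlinarith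
  have hxr : x ≤ r := by nlinarith
  have hxr' : -r ≤ x := by nlinarith
  rcases le_or_gt 0 x with hx | hx
  · have hA : (x + g) ^ 2 + y ^ 2 ≤ 2 * (r + g) ^ 2 := by nlinarith
    have hA0 : (0:ℝ) ≤ (x + g) ^ 2 + y ^ 2 := by positivity
    have hsq : ((x + g) ^ 2 + y ^ 2) * ((x + g) ^ 2 + y ^ 2) ≤ (2 * (r + g) ^ 2) * (2 * (r + g) ^ 2) :=
      mul_le_mul hA hA hA0 (by positivity)
    nlinarith [pow_pos (by linarith : (0:ℝ) < r + g) 4]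
  · have hyx : x ^ 2 ≤ y ^ 2 := by
      have h1 : -x ≤ |y| := by linarith
      have h2 : 0 ≤ -x := by linarith
      nlinarith [abs_nonneg y, sq_abs y]
    have h2x : 2 * x ^ 2 ≤ r ^ 2 := by nlinarith
    have hq : r + x ≥ r / 4 := by nlinarith
    have hA : (x + g) ^ 2 + y ^ 2 ≤ (r + g) ^ 2 := by nlinarith [mul_nonneg hg (neg_nonneg.mpr hx.le)]
    have hA0 : (0:ℝ) ≤ (x + g) ^ 2 + y ^ 2 := by positivity
    have hsq : ((x + g) ^ 2 + y ^ 2) * ((x + g) ^ 2 + y ^ 2) ≤ ((r + g) ^ 2) * ((r + g) ^ 2) :=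
      mul_le_mul hA hA hA0 (by positivity)
    nlinarith [pow_pos (by linarith : (0:ℝ) < r + g) 4]

lemma key_normSq {r x y g : ℝ} (hr : 0 < r) (hr2 : x ^ 2 + y ^ 2 = r ^ 2)
    (hxy : 0 ≤ x + |y|) (hg : 0 ≤ g) :
    (r + g) ^ 2 ≤ 18 * ((x + g) ^ 2 + y ^ 2) := by
  have hy2 : y ^ 2 ≤ r ^ 2 := by nlinarith
  have hxr : x ≤ r := by nlinarith
  have hxr' : -r ≤ x := by nlinarith
  rcases le_or_gt 0 x with hx | hx
  · have hrle : r ≤ x + |y| := by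
      nlinarith [abs_nonneg y, sq_abs y, sq_nonneg (x + |y| - r)]
    nlinarith [sq_abs y, abs_nonneg y, sq_nonneg (x + g - |y|)]
  · have hyx : x ^ 2 ≤ y ^ 2 := by
      have h1 : -x ≤ |y| := by linarith
      nlinarith [abs_nonneg y, sq_abs y]
    have hy2' : r ^ 2 ≤ 2 * y ^ 2 := by nlinarith
    rcases le_or_gt g (2 * r) with hg2 | hg2
    · nlinarith [sq_nonneg (x + g)]
    · have : g / 2 ≤ x + g := by nlinarith
      nlinarith [sq_nonneg y]


lemma cont_den {T α₁ α₂ b : ℝ} (ha1 : 0 < α₁) (ha2 : 0 < α₂) :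
    Continuous (fun v : ℝ => b + T * |v| ^ α₁ + T * |v| ^ α₂) := by
  have c1 : Continuous (fun v : ℝ => |v| ^ α₁) :=
    continuous_abs.rpow_const (fun x => Or.inr ha1.le)
  have c2 : Continuous (fun v : ℝ => |v| ^ α₂) :=
    continuous_abs.rpow_const (fun x => Or.inr ha2.le)
  exact ((continuous_const.add (continuous_const.mul c1)).add (continuous_const.mul c2))

lemma den_pos {T α₁ α₂ b : ℝ} (hT : 0 < T) (hb : 0 < b) (v : ℝ) :
    0 < b + T * |v| ^ α₁ + T * |v| ^ α₂ := by
  have h1 : (0:ℝ) ≤ |v| ^ α₁ := Real.rpow_nonneg (abs_nonneg v) _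
  have h2 : (0:ℝ) ≤ |v| ^ α₂ := Real.rpow_nonneg (abs_nonneg v) _
  nlinarith

lemma integrable_aux {T α₁ α₂ : ℝ} (hT : 0 < T)
    (h1 : α₁ ∈ Set.Ioc (0:ℝ) 2) (h2 : α₂ ∈ Set.Ioc (0:ℝ) 2)
    (hmax : 1 < max α₁ α₂) {b : ℝ} (hb : 0 < b) :
    Integrable (fun v : ℝ => (b + T * |v| ^ α₁ + T * |v| ^ α₂)⁻¹) := by
  set α := max α₁ α₂ with hα
  have hα0 : 0 < α := lt_trans one_pos hmax
  have hα2 : α ≤ 2 := max_le h1.2 h2.2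
  set m := min b T with hm
  have hm0 : 0 < m := lt_min hb hT
  have hdom : Integrable (fun v : ℝ => (4 / m) * (1 + ‖v‖) ^ (-α)) := by
    refine (integrable_one_add_norm ?_).const_mul _
    simpa using hmax
  refine hdom.mono' ?_ (ae_of_all _ ?_)
  · exact ((cont_den h1.1 h2.1).inv₀ (fun v => (den_pos hT hb v).ne')).aestronglyMeasurable
  · intro v
    have hd := den_pos (T := T) (α₁ := α₁) (α₂ := α₂) hT hb v
    rw [Real.norm_eq_abs, abs_of_pos (inv_pos.mpr hd)]
    have hAp : (0:ℝ) < (1 + |v|) ^ α := Real.rpow_pos_of_pos (by positivity) _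
    rw [Real.norm_eq_abs, Real.rpow_neg (by positivity)]
    have h4 : (1 + |v|) ^ α ≤ 4 * (1 + |v| ^ α) := by
      have hv0 : (0:ℝ) ≤ |v| := abs_nonneg v
      have hva : (0:ℝ) ≤ |v| ^ α := Real.rpow_nonneg hv0 _
      rcases le_total (|v|) 1 with hv | hv
      · have : (1 + |v|) ^ α ≤ (2:ℝ) ^ α :=
          Real.rpow_le_rpow (by positivity) (by linarith) hα0.le
        have h2a : (2:ℝ) ^ α ≤ (2:ℝ) ^ (2:ℝ) :=
          Real.rpow_le_rpow_of_exponent_le one_le_two hα2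
        have : (2:ℝ) ^ (2:ℝ) = 4 := by
          rw [show (2:ℝ) = ((2:ℕ):ℝ) by norm_num, Real.rpow_natCast]; norm_num
        nlinarith [Real.rpow_le_rpow_of_exponent_le (le_refl (1:ℝ)) hα2]
      · have h1v : (1 + |v|) ^ α ≤ (2 * |v|) ^ α :=
          Real.rpow_le_rpow (by positivity) (by linarith) hα0.le
        have h2v : (2 * |v|) ^ α = 2 ^ α * |v| ^ α := Real.mul_rpow (by norm_num) hv0
        have h2a : (2:ℝ) ^ α ≤ (2:ℝ) ^ (2:ℝ) :=
          Real.rpow_le_rpow_of_exponent_le one_le_two hα2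
        have h22 : (2:ℝ) ^ (2:ℝ) = 4 := by
          rw [show (2:ℝ) = ((2:ℕ):ℝ) by norm_num, Real.rpow_natCast]; norm_num
        have : (2:ℝ) ^ α * |v| ^ α ≤ 4 * |v| ^ α := by nlinarith
        linarith
    have h5 : m * (1 + |v| ^ α) ≤ b + T * |v| ^ α₁ + T * |v| ^ α₂ := by
      have hv1 : (0:ℝ) ≤ |v| ^ α₁ := Real.rpow_nonneg (abs_nonneg v) _
      have hv2 : (0:ℝ) ≤ |v| ^ α₂ := Real.rpow_nonneg (abs_nonneg v) _
      have hmb : m ≤ b := min_le_left _ _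
      have hmT : m ≤ T := min_le_right _ _
      have hva : |v| ^ α ≤ |v| ^ α₁ + |v| ^ α₂ := by
        rcases max_choice α₁ α₂ with h | h <;> rw [hα, h] <;> linarith
      have hva0 : (0:ℝ) ≤ |v| ^ α := Real.rpow_nonneg (abs_nonneg v) _
      nlinarith
    rw [← div_eq_mul_inv, inv_eq_one_div, div_le_div_iff₀ hd hAp]
    calc 1 * (1 + |v|) ^ α ≤ 4 * (1 + |v| ^ α) := by linarith
      _ ≤ (4 / m) * (m * (1 + |v| ^ α)) := by
          rw [← mul_assoc, div_mul_cancel₀]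
          exact hm0.ne'
      _ ≤ (4 / m) * (b + T * |v| ^ α₁ + T * |v| ^ α₂) := by
          apply mul_le_mul_of_nonneg_left h5 (by positivity)

section complexkey

variable {z : ℂ} {g : ℝ}

lemma abs_sq_decomp (z : ℂ) : z.re ^ 2 + z.im ^ 2 = (‖z‖) ^ 2 := by
  rw [Complex.sq_norm, Complex.normSq_apply]; ring

lemma normSq_w (z : ℂ) (g : ℝ) :
    Complex.normSq (z + (g : ℂ)) = (z.re + g) ^ 2 + z.im ^ 2 := by
  rw [Complex.normSq_apply]; simp; ring

lemma normSq_w_pos (hz : z ≠ 0) (hxy : 0 ≤ z.re + |z.im|) (hg : 0 ≤ g) :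
    0 < Complex.normSq (z + (g : ℂ)) := by
  have hr : 0 < ‖z‖ := norm_pos_iff.mpr hz
  have h18 := key_normSq hr (abs_sq_decomp z) hxy hg
  rw [normSq_w]
  nlinarith [add_pos_of_pos_of_nonneg hr hg]

lemma w_ne_zero (hz : z ≠ 0) (hxy : 0 ≤ z.re + |z.im|) (hg : 0 ≤ g) :
    z + (g : ℂ) ≠ 0 := by
  intro h
  have := normSq_w_pos hz hxy hg
  rw [h, Complex.normSq_zero] at this
  exact lt_irrefl 0 this

lemma key_abs_lower (hz : z ≠ 0) (hxy : 0 ≤ z.re + |z.im|) (hg : 0 ≤ g) :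
    ‖z‖ + g ≤ 5 * ‖z + (g : ℂ)‖ := by
  have hr : 0 < ‖z‖ := norm_pos_iff.mpr hz
  have h18 := key_normSq hr (abs_sq_decomp z) hxy hg
  rw [← normSq_w] at h18
  have h1 : 0 ≤ ‖z‖ + g := by positivity
  have h2 : (0:ℝ) ≤ 5 * ‖z + (g:ℂ)‖ := by positivity
  refine (pow_le_pow_iff_left₀ h1 h2 (two_ne_zero)).mp ?_
  have : (‖z + (g:ℂ)‖) ^ 2 = Complex.normSq (z + (g:ℂ)) := Complex.sq_norm _
  nlinarith

lemma key_pointwise (hz : z ≠ 0) (hxy : 0 ≤ z.re + |z.im|) (hg : 0 ≤ g) :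
    ‖(‖z‖ : ℂ) + z‖ / 4 * (‖z‖ + g)⁻¹ ≤
      (((‖z‖ : ℂ) + z) * (z + (g : ℂ))⁻¹).re := by
  set r := ‖z‖ with hrdef
  set x := z.re
  set y := z.im
  have hr : 0 < r := norm_pos_iff.mpr hz
  have hr2 : x ^ 2 + y ^ 2 = r ^ 2 := abs_sq_decomp z
  have hrx : 0 ≤ r + x := by
    have : x ^ 2 ≤ r ^ 2 := by nlinarith [sq_nonneg y]
    nlinarith
  have hA := normSq_w_pos hz hxy hg
  rw [normSq_w] at hA
  set s : ℂ := (r : ℂ) + z with hsdef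
  have hsre : s.re = r + x := by simp [hsdef]; rfl
  have hsim : s.im = y := by simp [hsdef]; rfl
  have habs2 : (‖s‖) ^ 2 = 2 * r * (r + x) := by
    rw [Complex.sq_norm, Complex.normSq_apply, hsre, hsim]; nlinarith
  have hre : ((s * (z + (g : ℂ))⁻¹).re) = ((r + x) * (r + g)) / ((x + g) ^ 2 + y ^ 2) := by
    rw [← div_eq_mul_inv, Complex.div_re, normSq_w]
    have hwre : (z + (g:ℂ)).re = x + g := by simp; rfl
    have hwim : (z + (g:ℂ)).im = y := by simp; rfl
    rw [hwre, hwim, hsre, hsim, ← add_div]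
    congr 1
    nlinarith
  rw [hre]
  have hkey := key_real hr hr2 hxy hg
  have hfin : ‖s‖ * ((x + g) ^ 2 + y ^ 2) ≤ 4 * (r + x) * (r + g) ^ 2 := by
    have h1 : 0 ≤ ‖s‖ * ((x + g) ^ 2 + y ^ 2) := by positivity
    have h2 : (0:ℝ) ≤ 4 * (r + x) * (r + g) ^ 2 := by positivity
    refine (pow_le_pow_iff_left₀ h1 h2 two_ne_zero).mp ?_
    have e1 : (‖s‖ * ((x + g) ^ 2 + y ^ 2)) ^ 2
        = 2 * r * (r + x) * ((x + g) ^ 2 + y ^ 2) ^ 2 := by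
      rw [mul_pow, habs2]
    rw [e1]
    nlinarith [mul_le_mul_of_nonneg_left hkey hrx]
  rw [inv_eq_one_div, div_mul_div_comm, div_le_div_iff₀ (by positivity) hA]
  nlinarith
end complexkey

lemma scaling {T α₁ α₂ : ℝ} (hT : 0 < T)
    (h1 : α₁ ∈ Set.Ioc (0:ℝ) 2) (h2 : α₂ ∈ Set.Ioc (0:ℝ) 2)
    (hmax : 1 < max α₁ α₂) {r : ℝ} (hr : 0 < r) :
    (∫ v : ℝ, (1 + T * |v| ^ α₁ + T * |v| ^ α₂)⁻¹) * min (r ^ (1 / max α₁ α₂ - 1)) 1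
      ≤ ∫ v : ℝ, (r + T * |v| ^ α₁ + T * |v| ^ α₂)⁻¹ := by
  set α := max α₁ α₂ with hα
  have hα0 : 0 < α := lt_trans one_pos hmax
  have hint1 := integrable_aux hT h1 h2 hmax one_pos
  have hintr := integrable_aux hT h1 h2 hmax hr
  have hInn : 0 ≤ ∫ v : ℝ, (1 + T * |v| ^ α₁ + T * |v| ^ α₂)⁻¹ :=
    integral_nonneg (fun v => inv_nonneg.mpr (den_pos hT one_pos v).le)
  rcases le_or_gt r 1 with hr1 | hr1
  · have hmin : min (r ^ (1 / α - 1)) 1 = 1 :=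
      min_eq_right (Real.one_le_rpow_of_pos_of_le_one_of_nonpos hr hr1
        (by rw [sub_nonpos, div_le_one hα0]; linarith))
    rw [hmin, mul_one]
    refine integral_mono hint1 hintr (fun v => ?_)
    exact inv_anti₀ (den_pos hT hr v) (by linarith)
  · have hmin : min (r ^ (1 / α - 1)) 1 = r ^ (1 / α - 1) :=
      min_eq_left (Real.rpow_le_one_of_one_le_of_nonpos hr1.le
        (by rw [sub_nonpos, div_le_one hα0]; linarith))
    rw [hmin]
    set c := r ^ (1 / α) with hc
    have hc0 : 0 < c := Real.rpow_pos_of_pos hr _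
    have hcomp := MeasureTheory.Measure.integral_comp_mul_left
      (fun v : ℝ => (r + T * |v| ^ α₁ + T * |v| ^ α₂)⁻¹) c
    rw [abs_of_pos (inv_pos.mpr hc0), smul_eq_mul] at hcomp
    have hpow : ∀ (β : ℝ), β ≤ α → ∀ v : ℝ, T * |c * v| ^ β ≤ r * (T * |v| ^ β) := by
      intro β hβα v
      rw [abs_mul, abs_of_pos hc0, Real.mul_rpow hc0.le (abs_nonneg v), hc,
        ← Real.rpow_mul hr.le]
      have hexp : 1 / α * β ≤ 1 := by
        rw [div_mul_eq_mul_div, one_mul, div_le_one hα0]; exact hβα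
      have : r ^ (1 / α * β) ≤ r := by
        calc r ^ (1 / α * β) ≤ r ^ (1:ℝ) := Real.rpow_le_rpow_of_exponent_le hr1.le hexp
          _ = r := Real.rpow_one r
      have hT0 : (0:ℝ) ≤ T := hT.le
      have hv : (0:ℝ) ≤ |v| ^ β := Real.rpow_nonneg (abs_nonneg v) _
      calc T * (r ^ (1 / α * β) * |v| ^ β) = r ^ (1 / α * β) * (T * |v| ^ β) := by ring
        _ ≤ r * (T * |v| ^ β) := mul_le_mul_of_nonneg_right this (mul_nonneg hT0 hv)
    have hptw : ∀ v : ℝ, r⁻¹ * (1 + T * |v| ^ α₁ + T * |v| ^ α₂)⁻¹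
        ≤ (r + T * |c * v| ^ α₁ + T * |c * v| ^ α₂)⁻¹ := by
      intro v
      have hd1 : 0 < r + T * |c * v| ^ α₁ + T * |c * v| ^ α₂ := den_pos hT hr (c * v)
      have hd2 : 0 < 1 + T * |v| ^ α₁ + T * |v| ^ α₂ := den_pos hT one_pos v
      have hle : r + T * |c * v| ^ α₁ + T * |c * v| ^ α₂
          ≤ r * (1 + T * |v| ^ α₁ + T * |v| ^ α₂) := by
        have := hpow α₁ (le_max_left _ _) v
        have := hpow α₂ (le_max_right _ _) v
        nlinarith
      calc r⁻¹ * (1 + T * |v| ^ α₁ + T * |v| ^ α₂)⁻¹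
          = (r * (1 + T * |v| ^ α₁ + T * |v| ^ α₂))⁻¹ := (mul_inv _ _).symm
        _ ≤ (r + T * |c * v| ^ α₁ + T * |c * v| ^ α₂)⁻¹ := inv_anti₀ hd1 hle
    have hcompint : Integrable (fun x : ℝ => (r + T * |c * x| ^ α₁ + T * |c * x| ^ α₂)⁻¹) :=
      hintr.comp_mul_left' hc0.ne'
    have hmono := integral_mono (hint1.const_mul r⁻¹) hcompint hptw
    rw [integral_const_mul] at hmono
    rw [hcomp] at hmono
    -- hmono : r⁻¹ * I ≤ c⁻¹ * J
    have hrpow : r ^ (1 / α - 1) = c * r⁻¹ := by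
      rw [Real.rpow_sub hr, Real.rpow_one, div_eq_mul_inv]
    set I := ∫ v : ℝ, (1 + T * |v| ^ α₁ + T * |v| ^ α₂)⁻¹
    set J := ∫ v : ℝ, (r + T * |v| ^ α₁ + T * |v| ^ α₂)⁻¹
    calc I * r ^ (1 / α - 1) = c * (r⁻¹ * I) := by rw [hrpow]; ring
      _ ≤ c * (c⁻¹ * J) := mul_le_mul_of_nonneg_left hmono hc0.le
      _ = J := by field_simp

lemma r_add_re_pos (z : ℂ) (hz : z ≠ 0) (hxy : 0 ≤ z.re + |z.im|) :
    0 < ‖z‖ + z.re := by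
  have hr : 0 < ‖z‖ := norm_pos_iff.mpr hz
  have hr2 : z.re ^ 2 + z.im ^ 2 = (‖z‖) ^ 2 := by
    rw [Complex.sq_norm, Complex.normSq_apply]; ring
  rcases le_or_gt 0 z.re with h | h
  · linarith
  · have h1 : -z.re ≤ |z.im| := by linarith
    have h2 : z.re ^ 2 ≤ z.im ^ 2 := by nlinarith [abs_nonneg z.im, sq_abs z.im]
    nlinarith


end stmt9aux

theorem stmt_9 (T α₁ α₂ : ℝ) (hT : 0 < T)
    (h1 : α₁ ∈ Set.Ioc (0 : ℝ) 2) (h2 : α₂ ∈ Set.Ioc (0 : ℝ) 2) (hmax : 1 < max α₁ α₂)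
    (z : ℂ) (hz : z ≠ 0)
    (harg : z.arg ∈ Set.Icc (-(3 * Real.pi / 4)) (3 * Real.pi / 4)) :
    (1 / 4) * (∫ v : ℝ, 1 / (1 + T * |v| ^ α₁ + T * |v| ^ α₂)) *
        min (‖z‖ ^ (1 / max α₁ α₂ - 1)) 1 ≤
      ‖Phi T α₁ α₂ z‖ := by
  have hxy := re_add_abs_im_nonneg z hz harg
  set r := ‖z‖ with hrdef
  have hr : 0 < r := norm_pos_iff.mpr hz
  have hintr := integrable_aux hT h1 h2 hmax hr
  have hGnn : ∀ v : ℝ, (0:ℝ) ≤ T * |v| ^ α₁ + T * |v| ^ α₂ := fun v => by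
    have h1 : (0:ℝ) ≤ |v| ^ α₁ := Real.rpow_nonneg (abs_nonneg v) _
    have h2 : (0:ℝ) ≤ |v| ^ α₂ := Real.rpow_nonneg (abs_nonneg v) _
    nlinarith
  set F : ℝ → ℂ := fun v => (z + ((T * |v| ^ α₁ + T * |v| ^ α₂ : ℝ) : ℂ))⁻¹ with hF
  have hFint : Integrable F := by
    refine (hintr.const_mul 5).mono' ?_ (ae_of_all _ ?_)
    · apply Continuous.aestronglyMeasurable
      apply Continuous.inv₀
      · have c1 : Continuous (fun v : ℝ => |v| ^ α₁) :=
          continuous_abs.rpow_const (fun x => Or.inr h1.1.le)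
        have c2 : Continuous (fun v : ℝ => |v| ^ α₂) :=
          continuous_abs.rpow_const (fun x => Or.inr h2.1.le)
        exact continuous_const.add (Complex.continuous_ofReal.comp
          ((continuous_const.mul c1).add (continuous_const.mul c2)))
      · intro v; exact w_ne_zero hz hxy (hGnn v)
    · intro v
      have h5 := key_abs_lower hz hxy (hGnn v)
      have hwpos : 0 < ‖z + ((T * |v| ^ α₁ + T * |v| ^ α₂ : ℝ) : ℂ)‖ :=
        norm_pos_iff.mpr (w_ne_zero hz hxy (hGnn v))
      have hden : 0 < r + T * |v| ^ α₁ + T * |v| ^ α₂ := den_pos hT hr v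
      rw [hF, norm_inv]
      rw [show r + (T * |v| ^ α₁ + T * |v| ^ α₂) = r + T * |v| ^ α₁ + T * |v| ^ α₂ by ring] at h5
      calc (‖z + ((T * |v| ^ α₁ + T * |v| ^ α₂ : ℝ) : ℂ)‖)⁻¹
          ≤ ((r + T * |v| ^ α₁ + T * |v| ^ α₂) / 5)⁻¹ :=
            inv_anti₀ (by positivity) (by linarith)
        _ = 5 * (r + T * |v| ^ α₁ + T * |v| ^ α₂)⁻¹ := by
            rw [inv_div, div_eq_mul_inv]
  set s : ℂ := (r : ℂ) + z with hsdef
  have hs : 0 < ‖s‖ := by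
    apply norm_pos_iff.mpr
    intro h0
    have : s.re = 0 := by rw [h0]; simp
    rw [hsdef] at this
    simp at this
    have := r_add_re_pos z hz hxy
    rw [← hrdef] at this
    linarith [this]
  have hptw : ∀ v : ℝ, ‖s‖ / 4 * (r + T * |v| ^ α₁ + T * |v| ^ α₂)⁻¹
      ≤ (s * F v).re := by
    intro v
    have := key_pointwise (g := T * |v| ^ α₁ + T * |v| ^ α₂) hz hxy (hGnn v)
    rw [show ‖z‖ + (T * |v| ^ α₁ + T * |v| ^ α₂)
        = ‖z‖ + T * |v| ^ α₁ + T * |v| ^ α₂ by ring] at this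
    exact this
  have hsF : Integrable (fun v => s * F v) := hFint.const_mul s
  have hmono := integral_mono (hintr.const_mul (‖s‖ / 4)) hsF.re hptw
  rw [integral_const_mul] at hmono
  rw [integral_re hsF] at hmono
  rw [integral_const_mul] at hmono
  have hPhi : (∫ v : ℝ, F v) = Phi T α₁ α₂ z := rfl
  rw [hPhi] at hmono
  have hre_le : RCLike.re (s * Phi T α₁ α₂ z) ≤ ‖s‖ * ‖Phi T α₁ α₂ z‖ := by
    have := Complex.re_le_norm (s * Phi T α₁ α₂ z)
    rw [norm_mul] at this
    exact this
  set J := ∫ v : ℝ, (r + T * |v| ^ α₁ + T * |v| ^ α₂)⁻¹ with hJ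
  have hJnn : 0 ≤ J := integral_nonneg (fun v => inv_nonneg.mpr (den_pos hT hr v).le)
  have hquarter : J / 4 ≤ ‖Phi T α₁ α₂ z‖ := by
    have h' : ‖s‖ * (J / 4) ≤ ‖s‖ * ‖Phi T α₁ α₂ z‖ := by
      calc ‖s‖ * (J / 4) = ‖s‖ / 4 * J := by ring
        _ ≤ RCLike.re (s * Phi T α₁ α₂ z) := hmono
        _ ≤ _ := hre_le
    exact le_of_mul_le_mul_left h' hs
  have hscale := scaling hT h1 h2 hmax hr
  simp only [one_div] at hscale ⊢
  calc 4⁻¹ * (∫ v : ℝ, (1 + T * |v| ^ α₁ + T * |v| ^ α₂)⁻¹) * min (r ^ ((max α₁ α₂)⁻¹ - 1)) 1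
      = ((∫ v : ℝ, (1 + T * |v| ^ α₁ + T * |v| ^ α₂)⁻¹) * min (r ^ ((max α₁ α₂)⁻¹ - 1)) 1) / 4 := by
        ring
    _ ≤ J / 4 := by linarith
    _ ≤ _ := hquarter
end

section
/- Let T > 0 and α₁, α₂ ∈ (0,2] with min{α₁,α₂} ≥ 1 and max{α₁,α₂} > 1, and let t ∈ [-3π/4, 3π/4]. Then |Φ(R e^{it})| → +∞ as R → 0+. -/
open MeasureTheory Filter Set

lemma aux_normSq (t R s : ℝ) :
    Complex.normSq ((R:ℂ) * Complex.exp (t * Complex.I) + (s:ℝ)) =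
      R^2 + s^2 + 2*R*s*Real.cos t := by
  rw [Complex.exp_mul_I]
  simp [Complex.normSq_apply, Complex.cos_ofReal_re, Complex.sin_ofReal_re]
  nlinarith [Real.sin_sq_add_cos_sq t]

lemma aux_re (t R s : ℝ) :
    ((R:ℂ) * Complex.exp (t * Complex.I) + (s:ℝ)).re = R * Real.cos t + s := by
  rw [Complex.exp_mul_I]
  simp [Complex.cos_ofReal_re]

lemma aux_im (t R s : ℝ) :
    ((R:ℂ) * Complex.exp (t * Complex.I) + (s:ℝ)).im = R * Real.sin t := by
  rw [Complex.exp_mul_I]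
  simp [Complex.sin_ofReal_re]

lemma aux_abs_lower (t R s : ℝ) (hcos : -(Real.sqrt 2/2) ≤ Real.cos t)
    (hR : 0 ≤ R) (hs : 0 ≤ s) :
    (R + s)/3 ≤ ‖(R:ℂ) * Complex.exp (t * Complex.I) + (s:ℝ)‖ := by
  have h2 : Real.sqrt 2 ≤ 3/2 := by
    nlinarith [Real.sq_sqrt (by norm_num : (2:ℝ) ≥ 0), Real.sqrt_nonneg 2]
  have hn : ((R+s)/3)^2 ≤ Complex.normSq ((R:ℂ) * Complex.exp (t * Complex.I) + (s:ℝ)) := by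
    rw [aux_normSq]
    nlinarith [sq_nonneg (R - s), mul_nonneg hR hs]
  calc (R+s)/3 = Real.sqrt (((R+s)/3)^2) := by rw [Real.sqrt_sq (by positivity)]
  _ ≤ Real.sqrt (Complex.normSq _) := Real.sqrt_le_sqrt hn
  _ = ‖_‖ := (Complex.norm_def _).symm

lemma aux_normSq_upper (t R s : ℝ) (hR : 0 ≤ R) (hs : 0 ≤ s) :
    Complex.normSq ((R:ℂ) * Complex.exp (t * Complex.I) + (s:ℝ)) ≤ (R + s)^2 := by
  rw [aux_normSq]
  nlinarith [Real.cos_le_one t, mul_nonneg hR hs]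

lemma aux_cos_lb (t : ℝ) (ht : |t| ≤ 3 * Real.pi / 4) :
    -(Real.sqrt 2/2) ≤ Real.cos t := by
  have h1 : Real.cos (3 * Real.pi / 4) = -(Real.sqrt 2/2) := by
    have h : 3 * Real.pi / 4 = Real.pi - Real.pi/4 := by ring
    rw [h, Real.cos_pi_sub, Real.cos_pi_div_four]
  have h2 : Real.cos (3 * Real.pi / 4) ≤ Real.cos |t| := by
    apply Real.cos_le_cos_of_nonneg_of_le_pi (abs_nonneg t)
    · linarith [Real.pi_pos]
    · exact ht
  rwa [Real.cos_abs, h1] at h2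

lemma aux_cos_add_sin (t : ℝ) (ht : |t| ≤ 3 * Real.pi / 4) :
    0 ≤ Real.cos t + |Real.sin t| := by
  rcases le_or_gt |t| (Real.pi / 2) with h | h
  · have : 0 ≤ Real.cos t := Real.cos_nonneg_of_mem_Icc
      ⟨by linarith [abs_le.1 h |>.1], (abs_le.1 h).2⟩
    positivity
  · have hsin : Real.sqrt 2 / 2 ≤ Real.sin |t| := by
      have he : Real.sin |t| = Real.cos (|t| - Real.pi/2) := by
        rw [Real.cos_sub_pi_div_two]
      rw [he, ← Real.cos_pi_div_four]
      exact Real.cos_le_cos_of_nonneg_of_le_pi (by linarith) (by linarith [Real.pi_pos])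
        (by linarith)
    have habs : Real.sin |t| ≤ |Real.sin t| := by
      rcases abs_choice t with h' | h' <;> rw [h'] <;>
        simp [Real.sin_neg, le_abs, neg_le]
    have := aux_cos_lb t ht
    linarith

section G
variable {T α₁ α₂ : ℝ} (hT : 0 < T)
  (h1 : α₁ ∈ Set.Ioc (0 : ℝ) 2) (h2 : α₂ ∈ Set.Ioc (0 : ℝ) 2)

include hT in
lemma G_nonneg (v : ℝ) : 0 ≤ T * |v| ^ α₁ + T * |v| ^ α₂ :=
  add_nonneg (mul_nonneg hT.le (Real.rpow_nonneg (abs_nonneg v) _))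
    (mul_nonneg hT.le (Real.rpow_nonneg (abs_nonneg v) _))

include h1 h2 in
omit hT in
lemma G_cont : Continuous (fun v : ℝ => T * |v| ^ α₁ + T * |v| ^ α₂) := by
  have c1 : Continuous (fun v : ℝ => |v| ^ α₁) :=
    continuous_abs.rpow_const (fun x => Or.inr h1.1.le)
  have c2 : Continuous (fun v : ℝ => |v| ^ α₂) :=
    continuous_abs.rpow_const (fun x => Or.inr h2.1.le)
  fun_prop

include hT in
omit h1 h2 in
lemma G_le (hmin : 1 ≤ min α₁ α₂) {v : ℝ} (hv0 : 0 < v) (hv1 : v ≤ 1) :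
    T * |v| ^ α₁ + T * |v| ^ α₂ ≤ 2 * T * v := by
  have ha : |v| = v := abs_of_pos hv0
  have e1 : v ^ α₁ ≤ v ^ (1:ℝ) :=
    Real.rpow_le_rpow_of_exponent_ge hv0 hv1 (hmin.trans (min_le_left _ _))
  have e2 : v ^ α₂ ≤ v ^ (1:ℝ) :=
    Real.rpow_le_rpow_of_exponent_ge hv0 hv1 (hmin.trans (min_le_right _ _))
  rw [ha]
  rw [Real.rpow_one] at e1 e2
  nlinarith

include hT h1 in
omit h2 in
lemma G_ge_sq {v : ℝ} (hv0 : 0 < v) (hv1 : v ≤ 1) :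
    T * v ^ (2:ℝ) ≤ T * |v| ^ α₁ + T * |v| ^ α₂ := by
  have ha : |v| = v := abs_of_pos hv0
  have e1 : v ^ (2:ℝ) ≤ v ^ α₁ :=
    Real.rpow_le_rpow_of_exponent_ge hv0 hv1 h1.2
  have := Real.rpow_nonneg (le_of_lt hv0) α₂
  rw [ha]
  nlinarith

include hT h1 h2 in
theorem f_integrable (hmax : 1 < max α₁ α₂) (t R : ℝ)
    (hcos : -(Real.sqrt 2/2) ≤ Real.cos t) (hR : 0 < R)
    (hGn : ∀ v : ℝ, 0 ≤ T * |v| ^ α₁ + T * |v| ^ α₂)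
    (hGc : Continuous (fun v : ℝ => T * |v| ^ α₁ + T * |v| ^ α₂))
    (habs : ∀ v : ℝ, (R + (T * |v| ^ α₁ + T * |v| ^ α₂))/3 ≤
      ‖(R:ℂ) * Complex.exp (t * Complex.I) + ((T * |v| ^ α₁ + T * |v| ^ α₂ : ℝ):ℂ)‖) :
    Integrable (fun v : ℝ =>
      ((R:ℂ) * Complex.exp (t * Complex.I) + ((T * |v| ^ α₁ + T * |v| ^ α₂ : ℝ):ℂ))⁻¹) := by
  set G : ℝ → ℝ := fun v => T * |v| ^ α₁ + T * |v| ^ α₂ with hG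
  set z : ℂ := (R:ℂ) * Complex.exp (t * Complex.I) with hz
  set f : ℝ → ℂ := fun v => (z + (G v : ℝ))⁻¹ with hf
  have hne : ∀ v, z + ((G v : ℝ):ℂ) ≠ 0 := by
    intro v h
    have h0 : (0:ℝ) < (R + G v)/3 := by have := hGn v; positivity
    have hb := habs v
    rw [show (z + ((T * |v| ^ α₁ + T * |v| ^ α₂ : ℝ):ℂ)) = z + ((G v : ℝ):ℂ) from rfl,
      h] at hb
    simp only [norm_zero] at hb
    have : (R + (T * |v| ^ α₁ + T * |v| ^ α₂)) / 3 = (R + G v)/3 := rfl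
    rw [this] at hb
    linarith
  have hcont : Continuous f :=
    (continuous_const.add (Complex.continuous_ofReal.comp hGc)).inv₀ hne
  have hnorm : ∀ v, ‖f v‖ ≤ 3 / (R + G v) := by
    intro v
    have h0 : (0:ℝ) < (R + G v)/3 := by have := hGn v; positivity
    have h3 : (R + G v)/3 ≤ ‖z + ((G v:ℝ):ℂ)‖ := habs v
    calc ‖f v‖ = (‖z + ((G v:ℝ):ℂ)‖)⁻¹ := by
            simp only [hf, norm_inv, ]
    _ ≤ ((R + G v)/3)⁻¹ := inv_anti₀ h0 h3
    _ = 3/(R + G v) := by rw [inv_div]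
  set β := max α₁ α₂ with hβdef
  have hβ : 1 < β := hmax
  have hIcc : IntegrableOn f (Icc (-1) 1) := hcont.integrableOn_Icc
  have hIoi : IntegrableOn f (Ioi 1) := by
    have hmaj : IntegrableOn (fun v : ℝ => (3/T) * v ^ (-β)) (Ioi 1) :=
      (integrableOn_Ioi_rpow_of_lt (by linarith) one_pos).const_mul _
    refine hmaj.integrable.mono hcont.aestronglyMeasurable.restrict ?_
    refine (ae_restrict_iff' measurableSet_Ioi).2 (ae_of_all _ fun v hv => ?_)
    have hv1 : (1:ℝ) < v := hv
    have hv0 : (0:ℝ) ≤ v := by linarith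
    have hvb : T * v ^ β ≤ G v := by
      have ha : |v| = v := abs_of_pos (by linarith)
      have k1 := mul_nonneg hT.le (Real.rpow_nonneg hv0 α₁)
      have k2 := mul_nonneg hT.le (Real.rpow_nonneg hv0 α₂)
      rcases max_cases α₁ α₂ with ⟨he, _⟩ | ⟨he, _⟩ <;>
      · rw [hβdef, he]
        show _ ≤ T * |v| ^ α₁ + T * |v| ^ α₂
        rw [ha]
        linarith
    have hvβ : (0:ℝ) < v ^ β := Real.rpow_pos_of_pos (by linarith) _
    have h2' : ‖f v‖ ≤ 3 / (T * v ^ β) := by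
      refine (hnorm v).trans ?_
      apply div_le_div_of_nonneg_left (by norm_num) (by positivity)
      linarith [hvb]
    have hnval : ‖(3/T) * v ^ (-β)‖ = 3/(T * v ^ β) := by
      rw [Real.norm_eq_abs, abs_of_nonneg (by positivity), Real.rpow_neg hv0]
      field_simp
    calc ‖f v‖ ≤ 3/(T * v ^ β) := h2'
    _ = ‖(3/T) * v ^ (-β)‖ := hnval.symm
  have hIio : IntegrableOn f (Iio (-1)) := by
    have hiff := (MeasurePreserving.integrableOn_comp_preimage
      (Measure.measurePreserving_neg (volume : Measure ℝ))
      (Homeomorph.neg ℝ).measurableEmbedding (f := f) (s := Iio (-1)))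
    apply hiff.1
    have hset : (Neg.neg ⁻¹' Iio (-1) : Set ℝ) = Ioi 1 := by
      ext x; simp
    have hfeq : (f ∘ Neg.neg) = f := by
      funext v; simp only [Function.comp, hf, hG, abs_neg]
    rw [hset, hfeq]
    exact hIoi
  rw [← integrableOn_univ]
  have hun : IntegrableOn f (Iio (-1) ∪ (Icc (-1) 1 ∪ Ioi 1)) :=
    hIio.union (hIcc.union hIoi)
  refine hun.mono_set fun x _ => ?_
  rcases lt_trichotomy x (-1) with h | h | h
  · exact Or.inl h
  · exact Or.inr (Or.inl ⟨le_of_eq h.symm, by linarith⟩)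
  · rcases le_or_gt x 1 with h' | h'
    · exact Or.inr (Or.inl ⟨h.le, h'⟩)
    · exact Or.inr (Or.inr h')

end G

set_option maxHeartbeats 2000000 in
theorem stmt_14 (T α₁ α₂ : ℝ) (hT : 0 < T)
    (h1 : α₁ ∈ Set.Ioc (0 : ℝ) 2) (h2 : α₂ ∈ Set.Ioc (0 : ℝ) 2)
    (hmin : 1 ≤ min α₁ α₂) (hmax : 1 < max α₁ α₂)
    (t : ℝ) (ht : t ∈ Set.Icc (-(3 * Real.pi / 4)) (3 * Real.pi / 4)) :
    Tendsto (fun R : ℝ => ‖Phi T α₁ α₂ (R * Complex.exp (t * Complex.I))‖)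
      (nhdsWithin 0 (Set.Ioi 0)) atTop := by
  rw [tendsto_atTop]
  intro M
  obtain ⟨M', hM'⟩ : ∃ M' : ℝ, M' = max M 1 := ⟨_, rfl⟩
  have hM1 : (1:ℝ) ≤ M' := by rw [hM']; exact le_max_right _ _
  have hMM : M ≤ M' := by rw [hM']; exact le_max_left _ _
  obtain ⟨δ, hδdef⟩ : ∃ δ : ℝ, δ = Real.exp (-(16*T*M')) := ⟨_, rfl⟩
  have hδ0 : (0:ℝ) < δ := by rw [hδdef]; exact Real.exp_pos _
  have hδ1 : δ < 1 := by
    rw [hδdef, Real.exp_lt_one_iff]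
    nlinarith
  have hlog : Real.log δ = -(16*T*M') := by rw [hδdef]; exact Real.log_exp _
  have habst : |t| ≤ 3*Real.pi/4 := by
    rw [abs_le]; exact ⟨by linarith [ht.1], ht.2⟩
  have hcos := aux_cos_lb t habst
  have hcs := aux_cos_add_sin t habst
  have hthr : (0:ℝ) < T * δ ^ (2:ℝ) := by positivity
  filter_upwards [Ioo_mem_nhdsGT_of_mem (Set.mem_Ico.mpr ⟨le_refl (0:ℝ), hthr⟩)] with R hRm
  obtain ⟨hR0, hRthr⟩ := hRm
  obtain ⟨G, hGdef⟩ : ∃ G : ℝ → ℝ, G = fun v => T * |v| ^ α₁ + T * |v| ^ α₂ := ⟨_, rfl⟩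
  obtain ⟨z, hzdef⟩ : ∃ z : ℂ, z = (R:ℂ) * Complex.exp ((t:ℂ) * Complex.I) := ⟨_, rfl⟩
  obtain ⟨f, hfdef⟩ : ∃ f : ℝ → ℂ, f = fun v => (z + ((G v : ℝ):ℂ))⁻¹ := ⟨_, rfl⟩
  have hGn : ∀ v, 0 ≤ G v := by
    intro v; rw [hGdef]; exact G_nonneg hT v
  have hGc : Continuous G := by rw [hGdef]; exact G_cont h1 h2
  have habs : ∀ v, (R + G v)/3 ≤ ‖z + ((G v:ℝ):ℂ)‖ := by
    intro v; rw [hzdef]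
    have := aux_abs_lower t R (G v) hcos hR0.le (hGn v)
    rw [hGdef]
    rw [hGdef] at this
    exact this
  have hInt : Integrable f := by
    simp only [hfdef, hGdef, hzdef]
    exact f_integrable hT h1 h2 hmax t R hcos hR0
      (fun v => by have := hGn v; simp only [hGdef] at this; exact this)
      (by rw [hGdef] at hGc; exact hGc)
      (by
        intro v
        have := habs v
        rw [hzdef, hGdef] at this
        exact this)
  have hPhi : Phi T α₁ α₂ ((R:ℂ) * Complex.exp ((t:ℂ) * Complex.I)) = ∫ v, f v := by
    simp only [Phi, hfdef, hGdef, hzdef]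
  obtain ⟨q, hqdef⟩ : ∃ q : ℝ → ℝ, q = fun v => Complex.normSq (z + ((G v:ℝ):ℂ)) := ⟨_, rfl⟩
  have hane : ∀ v, (0:ℝ) < ‖z + ((G v:ℝ):ℂ)‖ := by
    intro v
    have h0 : (0:ℝ) < (R + G v)/3 := by have := hGn v; positivity
    linarith [habs v]
  have hq : ∀ v, 0 < q v := by
    intro v
    simp only [hqdef]
    exact Complex.normSq_pos.2 (fun h => by simpa [h] using (hane v))
  have hre : ∀ v, (f v).re = (R * Real.cos t + G v) / q v := by
    intro v
    simp only [hfdef, hqdef, Complex.inv_re]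
    rw [show (z + ((G v:ℝ):ℂ)).re = R * Real.cos t + G v by
      rw [hzdef]; exact aux_re t R (G v)]
  have him : ∀ v, (f v).im = -(R * Real.sin t) / q v := by
    intro v
    simp only [hfdef, hqdef, Complex.inv_im]
    rw [show (z + ((G v:ℝ):ℂ)).im = R * Real.sin t by
      rw [hzdef]; exact aux_im t R (G v)]
  have hre_int : Integrable (fun v => (R * Real.cos t + G v) / q v) :=
    hInt.re.congr (ae_of_all _ fun v => hre v)
  have hqinv_int : Integrable (fun v => (q v)⁻¹) := by
    have hmeas : AEStronglyMeasurable (fun v => (q v)⁻¹) volume := by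
      apply Continuous.aestronglyMeasurable
      apply Continuous.inv₀
      · rw [hqdef]
        exact Complex.continuous_normSq.comp
          (continuous_const.add (Complex.continuous_ofReal.comp hGc))
      · exact fun v => (hq v).ne'
    refine (hInt.norm.const_mul (3/R)).mono' hmeas (ae_of_all _ fun v => ?_)
    have ha := hane v
    have ha3 : R/3 ≤ ‖z + ((G v:ℝ):ℂ)‖ := by
      have k1 := habs v
      have k2 := hGn v
      linarith
    have hinv : (‖z + ((G v:ℝ):ℂ)‖)⁻¹ ≤ 3/R := by
      rw [show (3:ℝ)/R = (R/3)⁻¹ by rw [inv_div]]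
      exact inv_anti₀ (by positivity) ha3
    have hqval : q v = (‖z + ((G v:ℝ):ℂ)‖)^2 := by
      simp only [hqdef]; exact (Complex.sq_norm _).symm
    have hfn : ‖f v‖ = (‖z + ((G v:ℝ):ℂ)‖)⁻¹ := by
      simp only [hfdef, norm_inv, ]
    rw [Real.norm_eq_abs, abs_of_nonneg (inv_nonneg.2 (hq v).le), hqval, hfn]
    rw [pow_two, mul_inv]
    exact mul_le_mul_of_nonneg_right hinv (inv_nonneg.2 ha.le) |>.trans_eq (by ring)
  obtain ⟨P, hPdef⟩ : ∃ P : ℂ, P = ∫ v, f v := ⟨_, rfl⟩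
  have hPre : P.re = ∫ v, (R * Real.cos t + G v) / q v := by
    have h := integral_re (𝕜 := ℂ) hInt
    simp only [RCLike.re_to_complex] at h
    rw [hPdef, ← h]
    exact integral_congr_ae (ae_of_all _ fun v => hre v)
  obtain ⟨B, hBdef⟩ : ∃ B : ℝ, B = ∫ v, (q v)⁻¹ := ⟨_, rfl⟩
  have hB : 0 ≤ B := by
    rw [hBdef]; exact integral_nonneg fun v => inv_nonneg.2 (hq v).le
  have hPim : P.im = -(R * Real.sin t) * B := by
    have h := integral_im (𝕜 := ℂ) hInt
    simp only [RCLike.im_to_complex] at h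
    rw [hPdef, ← h, hBdef, ← integral_const_mul]
    exact integral_congr_ae (ae_of_all _ fun v => by
      show (f v).im = _
      rw [him v, div_eq_mul_inv])
  obtain ⟨c, hcdef⟩ : ∃ c : ℝ, c = Real.cos t + |Real.sin t| := ⟨_, rfl⟩
  have hc0 : 0 ≤ c := by rw [hcdef]; exact hcs
  have hptw : ∀ v, (R * Real.cos t + G v) / q v + (R * |Real.sin t|) * (q v)⁻¹
      = (R * c + G v) / q v := by
    intro v
    rw [mul_comm (R * |Real.sin t|) ((q v)⁻¹), inv_mul_eq_div, ← add_div]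
    congr 1
    rw [hcdef]; ring
  have hkey :
      P.re + R * |Real.sin t| * B = ∫ v, (R * c + G v) / q v := by
    have h2' : R * |Real.sin t| * B = ∫ v, (R * |Real.sin t|) * (q v)⁻¹ := by
      rw [hBdef, ← integral_const_mul]
    rw [hPre, h2', ← integral_add hre_int (hqinv_int.const_mul _)]
    exact integral_congr_ae (ae_of_all _ fun v => hptw v)
  have hI_int : Integrable (fun v => (R * c + G v) / q v) :=
    (hre_int.add (hqinv_int.const_mul (R * |Real.sin t|))).congr
      (ae_of_all _ fun v => hptw v)
  have hI_nn : ∀ v, 0 ≤ (R * c + G v) / q v := fun v =>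
    div_nonneg (add_nonneg (mul_nonneg hR0.le hc0) (hGn v)) (hq v).le
  have hIset : (∫ v in Ioc δ 1, (R * c + G v) / q v) ≤ ∫ v, (R * c + G v) / q v :=
    setIntegral_le_integral hI_int (ae_of_all _ hI_nn)
  have hlow : (∫ v in Ioc δ 1, (8*T*v)⁻¹) ≤ ∫ v in Ioc δ 1, (R * c + G v) / q v := by
    refine setIntegral_mono_on ?_ (hI_int.integrableOn) measurableSet_Ioc ?_
    · have hco : ContinuousOn (fun v : ℝ => (8*T*v)⁻¹) (Icc δ 1) := by
        apply ContinuousOn.inv₀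
        · fun_prop
        · intro x hx
          have hx0 : 0 < x := lt_of_lt_of_le hδ0 hx.1
          positivity
      exact (hco.integrableOn_Icc).mono_set Ioc_subset_Icc_self
    · intro v hv
      obtain ⟨hvδ, hv1⟩ := hv
      have hv0 : (0:ℝ) < v := lt_trans hδ0 hvδ
      have hsq : T * δ ^ (2:ℝ) ≤ T * v ^ (2:ℝ) := by
        have := Real.rpow_le_rpow hδ0.le hvδ.le (by norm_num : (0:ℝ) ≤ 2)
        nlinarith
      have hGv_ge : T * δ ^ (2:ℝ) ≤ G v := by
        refine hsq.trans ?_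
        rw [hGdef]
        exact G_ge_sq hT h1 hv0 hv1
      have hRG : R ≤ G v := le_trans hRthr.le hGv_ge
      have hGpos : (0:ℝ) < G v := lt_of_lt_of_le hthr hGv_ge
      have hqle : q v ≤ (R + G v)^2 := by
        have := aux_normSq_upper t R (G v) hR0.le (hGn v)
        rw [← hzdef] at this
        simp only [hqdef]
        exact this
      have hGle : G v ≤ 2*T*v := by
        rw [hGdef]
        exact G_le hT hmin hv0 hv1
      have step1 : (8*T*v)⁻¹ ≤ G v / q v := by
        rw [inv_eq_one_div, div_le_div_iff₀ (by positivity) (hq v)]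
        have k1 : (R + G v)^2 ≤ 4 * (G v)^2 := by nlinarith
        have k2 : 4 * (G v)^2 ≤ G v * (8*T*v) := by nlinarith
        nlinarith
      refine step1.trans ?_
      rw [div_le_div_iff₀ (hq v) (hq v)]
      have : 0 ≤ R * c := mul_nonneg hR0.le hc0
      nlinarith [hq v]
  have hval : (∫ v in Ioc δ 1, (8*T*v)⁻¹) = 2 * M' := by
    rw [← intervalIntegral.integral_of_le hδ1.le]
    have heq : ∀ v : ℝ, (8*T*v)⁻¹ = (8*T)⁻¹ * v⁻¹ := fun v => by rw [mul_inv]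
    simp_rw [heq]
    rw [intervalIntegral.integral_const_mul]
    rw [integral_inv (by
      rw [Set.uIcc_of_le hδ1.le]
      intro h
      exact absurd h.1 (by linarith))]
    rw [show (1:ℝ)/δ = δ⁻¹ by rw [one_div], Real.log_inv, hlog]
    have hTne : (T:ℝ) ≠ 0 := hT.ne'
    field_simp
    ring
  have e2 : R * |Real.sin t| * B = |P.im| := by
    rw [hPim, abs_mul, abs_neg, abs_mul, abs_of_nonneg hR0.le, abs_of_nonneg hB]
  have e1 : P.re ≤ ‖P‖ := Complex.re_le_norm P
  have e3 : |P.im| ≤ ‖P‖ := Complex.abs_im_le_norm P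
  have hics : 2 * M' ≤ 2 * ‖P‖ := by
    have h0 : 2 * M' ≤ P.re + R * |Real.sin t| * B := by
      rw [hkey, ← hval]
      exact hlow.trans hIset
    rw [e2] at h0
    linarith
  have hgoal : Phi T α₁ α₂ ((R:ℂ) * Complex.exp ((t:ℂ) * Complex.I)) = P := by
    rw [hPhi, hPdef]
  rw [hgoal]
  linarith
end

section
/- Let X be a non-negative real random variable, let α > 0 and A ≥ 0, and suppose lim_{λ→+∞} λ^α · E[e^{-λX}] = A. Then for every integer m ≥ 1 and all real coefficients a_1, ..., a_m, setting H(x) = ∑_{k=1}^m a_k x^k, one has lim_{λ→+∞} λ^α · E[H(e^{-λX})] = (A / Γ(1+α)) · ∫_0^∞ H(e^{-v^{1/α}}) dv. -/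
open MeasureTheory Filter

lemma aux_integrable_exp_rpow {b α : ℝ} (hα : 0 < α) (hb : 0 < b) :
    MeasureTheory.IntegrableOn (fun v : ℝ => Real.exp (-b * v ^ (1 / α))) (Set.Ioi 0) := by
  rw [← integrableOn_Ioi_comp_rpow_iff' _ (ne_of_gt hα)]
  refine (integrableOn_rpow_mul_exp_neg_mul_rpow (s := α - 1) (p := 1) (b := b)
    (by linarith) zero_lt_one hb).congr_fun (fun x hx => ?_) measurableSet_Ioi
  have hx0 : (0 : ℝ) < x := hx
  rw [smul_eq_mul, ← Real.rpow_mul hx0.le, mul_one_div_cancel hα.ne', Real.rpow_one]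
  simp only [Real.rpow_one]

theorem stmt_18 {Ω : Type*} [MeasurableSpace Ω] (P : Measure Ω) [IsProbabilityMeasure P]
    (X : Ω → ℝ) (hXm : Measurable X) (hX : ∀ᵐ ω ∂P, 0 ≤ X ω)
    (α A : ℝ) (hα : 0 < α) (hA : 0 ≤ A)
    (h : Tendsto (fun lam : ℝ => lam ^ α * ∫ ω, Real.exp (-lam * X ω) ∂P) atTop (nhds A))
    (m : ℕ) (hm : 1 ≤ m) (a : Fin m → ℝ) :
    Tendsto (fun lam : ℝ =>
        lam ^ α * ∫ ω, (∑ k : Fin m, a k * Real.exp (-lam * X ω) ^ ((k : ℕ) + 1)) ∂P)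
      atTop
      (nhds (A / Real.Gamma (1 + α) *
        ∫ v in Set.Ioi (0 : ℝ), ∑ k : Fin m, a k * Real.exp (-(v ^ (1 / α))) ^ ((k : ℕ) + 1))) := by
  have hΓ : (0 : ℝ) < Real.Gamma (1 + α) := Real.Gamma_pos_of_pos (by linarith)
  set c : Fin m → ℝ := fun k => (k : ℕ) + 1 with hc
  have hcpos : ∀ k : Fin m, (0 : ℝ) < c k := fun k => by positivity
  -- pointwise rewrite for the RHS integrand
  have hptR : ∀ (v : ℝ) (k : Fin m), a k * Real.exp (-(v ^ (1 / α))) ^ ((k : ℕ) + 1)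
      = a k * Real.exp (-c k * v ^ (1 / α)) := by
    intro v k
    rw [← Real.exp_nat_mul]
    congr 1
    simp only [hc]
    push_cast
    ring
  have hInt : ∀ k : Fin m,
      MeasureTheory.IntegrableOn (fun v : ℝ => Real.exp (-c k * v ^ (1 / α))) (Set.Ioi 0) :=
    fun k => aux_integrable_exp_rpow hα (hcpos k)
  have hIval : ∀ k : Fin m,
      (∫ v in Set.Ioi (0 : ℝ), Real.exp (-c k * v ^ (1 / α)))
        = c k ^ (-α) * Real.Gamma (1 + α) := by
    intro k
    rw [integral_exp_neg_mul_rpow (by positivity) (hcpos k)]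
    rw [show (-1 : ℝ) / (1 / α) = -α by field_simp, show (1 : ℝ) / (1 / α) = α by field_simp,
      add_comm α 1]
  have hsumI : (∫ v in Set.Ioi (0 : ℝ),
        ∑ k : Fin m, a k * Real.exp (-(v ^ (1 / α))) ^ ((k : ℕ) + 1))
      = ∑ k : Fin m, a k * (c k ^ (-α) * Real.Gamma (1 + α)) := by
    simp_rw [hptR]
    rw [MeasureTheory.integral_finset_sum _ (fun k _ => (hInt k).const_mul (a k))]
    exact Finset.sum_congr rfl fun k _ => by
      rw [integral_const_mul, hIval k]
  -- per-k limit
  have hL : ∀ k : Fin m,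
      Tendsto (fun lam : ℝ => a k * (lam ^ α * ∫ ω, Real.exp (-(c k * lam) * X ω) ∂P))
        atTop (nhds (a k * (c k ^ (-α) * A))) := by
    intro k
    have h1 : Tendsto (fun lam : ℝ => (c k * lam) ^ α * ∫ ω, Real.exp (-(c k * lam) * X ω) ∂P)
        atTop (nhds A) := h.comp (Tendsto.const_mul_atTop (hcpos k) tendsto_id)
    have h2 := h1.const_mul (c k ^ (-α))
    refine Tendsto.const_mul _ (h2.congr' ?_)
    filter_upwards [eventually_ge_atTop (0 : ℝ)] with lam hlam
    rw [Real.mul_rpow (hcpos k).le hlam, ← mul_assoc, ← mul_assoc,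
      ← Real.rpow_add (hcpos k), neg_add_cancel, Real.rpow_zero, one_mul]
  have hsum := tendsto_finset_sum (f := fun k (lam : ℝ) =>
      a k * (lam ^ α * ∫ ω, Real.exp (-(c k * lam) * X ω) ∂P)) Finset.univ (fun k _ => hL k)
  have hval : A / Real.Gamma (1 + α) *
      (∫ v in Set.Ioi (0 : ℝ), ∑ k : Fin m, a k * Real.exp (-(v ^ (1 / α))) ^ ((k : ℕ) + 1))
      = ∑ k : Fin m, a k * (c k ^ (-α) * A) := by
    rw [hsumI, Finset.mul_sum]
    refine Finset.sum_congr rfl fun k _ => ?_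
    field_simp
  rw [hval]
  refine hsum.congr' ?_
  filter_upwards [eventually_ge_atTop (0 : ℝ)] with lam hlam
  have hI : ∀ k : Fin m, Integrable (fun ω => Real.exp (-(c k * lam) * X ω)) P := by
    intro k
    refine Integrable.mono' (integrable_const (1 : ℝ))
      ((hXm.const_mul _).exp.aestronglyMeasurable) ?_
    filter_upwards [hX] with ω hω
    rw [Real.norm_eq_abs, abs_of_pos (Real.exp_pos _), Real.exp_le_one_iff]
    have := mul_nonneg (mul_nonneg (hcpos k).le hlam) hω
    linarith
  have hpt : ∀ (ω : Ω) (k : Fin m), a k * Real.exp (-lam * X ω) ^ ((k : ℕ) + 1)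
      = a k * Real.exp (-(c k * lam) * X ω) := by
    intro ω k
    rw [← Real.exp_nat_mul]
    congr 1
    simp only [hc]
    push_cast
    ring
  simp_rw [hpt]
  rw [MeasureTheory.integral_finset_sum _ (fun k _ => (hI k).const_mul (a k)), Finset.mul_sum]
  exact Finset.sum_congr rfl fun k _ => by
    rw [integral_const_mul]; ring
end
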